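/- arXiv:1102.0568 — 3 statements merged into one kernel-verified Lean document; each statement's English description precedes it below -/
import Mathlib

section
/- Let p = 2 and f, u ∈ Z_2[[x]] with f(0)=u(0)=0, f∘u=u∘f, Weierstrass degree of f equal to 2, v_2(f'(0))=1, u invertible nontorsion with v_2(u'(0)−1)=2. Let α be the nonzero root of f and β, β' the two roots of f(x)−α in an algebraic closure of Q_2. If γ₁, γ₂ are the roots of the Eisenstein quadratic over Z_2[β] obtained from the Weierstrass factorization of f(x)−β, then v_2(γ₂−γ₁) ∈ {1/2, 1, 5/4}. -/
open PowerSeries Filter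

noncomputable section

/-- Composition `f(g(x))` of formal power series (intended for `g` with zero constant term). -/
def compPS {R : Type*} [CommSemiring R] (f g : PowerSeries R) : PowerSeries R :=
  PowerSeries.mk fun n =>
    ∑ k ∈ Finset.range (n + 1), PowerSeries.coeff k f * PowerSeries.coeff n (g ^ k)

/-- `n`-fold compositional iterate of a power series. -/
def iterPS {R : Type*} [CommSemiring R] (f : PowerSeries R) : ℕ → PowerSeries R
  | 0 => PowerSeries.X
  | n + 1 => compPS f (iterPS f n)

/-- Evaluation of a power series at a point of a normed field. -/
def evalT {R K : Type*} [CommSemiring R] [NormedField K] [Algebra R K]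
    (f : PowerSeries R) (x : K) : K :=
  ∑' n : ℕ, algebraMap R K (PowerSeries.coeff n f) * x ^ n

set_option linter.unusedSectionVars false

namespace Stmt8Aux

open Topology

variable {K : Type*} [NormedField K] [IsUltrametricDist K]
    [Algebra ℚ_[2] K] [Algebra ℤ_[2] K] [IsScalarTower ℤ_[2] ℚ_[2] K]
    [IsAlgClosure ℚ_[2] K]

/-- The normed-space structure on `K` coming from `hK`. -/
@[reducible]
def nsp (hK : ∀ x : ℚ_[2], ‖algebraMap ℚ_[2] K x‖ = ‖x‖) : NormedSpace ℚ_[2] K :=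
  { norm_smul_le := fun c x => by
      rw [Algebra.smul_def, norm_mul, hK] }

theorem normZ (hK : ∀ x : ℚ_[2], ‖algebraMap ℚ_[2] K x‖ = ‖x‖) (z : ℤ_[2]) :
    ‖algebraMap ℤ_[2] K z‖ = ‖z‖ := by
  rw [IsScalarTower.algebraMap_apply ℤ_[2] ℚ_[2] K, hK, PadicInt.norm_def]
  rfl

theorem isIntegral (x : K) : IsIntegral ℚ_[2] x := by
  haveI := IsAlgClosure.isAlgebraic (R := ℚ_[2]) (K := K)
  exact (Algebra.IsAlgebraic.isAlgebraic x).isIntegral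

theorem summable_of_mem_of_tendsto
    (hK : ∀ x : ℚ_[2], ‖algebraMap ℚ_[2] K x‖ = ‖x‖)
    (E : IntermediateField ℚ_[2] K) (hFD : FiniteDimensional ℚ_[2] E)
    (u : ℕ → K) (hm : ∀ n, u n ∈ E) (h0 : Tendsto u atTop (𝓝 0)) :
    Summable u := by
  letI := nsp hK
  haveI : FiniteDimensional ℚ_[2] E.toSubmodule := hFD
  have hcompl : IsComplete (E.toSubmodule : Set K) :=
    Submodule.complete_of_finiteDimensional _
  have hc : CauchySeq (fun s : Finset ℕ => ∑ i ∈ s, u i) := by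
    rw [cauchySeq_finset_iff_sum_vanishing]
    intro e he
    obtain ⟨ε, hε, hball⟩ := Metric.mem_nhds_iff.1 he
    obtain ⟨N, hN⟩ := Metric.tendsto_atTop.1 h0 (ε / 2) (by positivity)
    refine ⟨Finset.range N, fun t ht => hball ?_⟩
    have hb : ‖∑ i ∈ t, u i‖ ≤ ε / 2 := by
      refine IsUltrametricDist.norm_sum_le_of_forall_le_of_nonneg (by positivity) ?_
      intro i hi
      have hiN : N ≤ i := by
        by_contra hlt
        exact (Finset.disjoint_left.1 ht hi) (Finset.mem_range.2 (not_le.1 hlt))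
      have := hN i hiN
      rw [dist_zero_right] at this
      exact this.le
    rw [Metric.mem_ball, dist_zero_right]
    exact lt_of_le_of_lt hb (by linarith)
  obtain ⟨v, _, hvt⟩ := cauchySeq_tendsto_of_isComplete hcompl
    (fun s => Submodule.sum_mem _ fun i _ => hm i) hc
  exact ⟨v, hvt⟩


variable (f : PowerSeries ℤ_[2])

/-- Coefficients of `f` in `K`. -/
def A (n : ℕ) : K := algebraMap ℤ_[2] K (PowerSeries.coeff n f)

theorem norm_A_le (hK : ∀ x : ℚ_[2], ‖algebraMap ℚ_[2] K x‖ = ‖x‖) (n : ℕ) :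
    ‖(A f n : K)‖ ≤ 1 := by
  rw [A, normZ hK]
  exact PadicInt.norm_le_one _

theorem A_mem (E : IntermediateField ℚ_[2] K) (n : ℕ) : (A f n : K) ∈ E := by
  rw [A, IsScalarTower.algebraMap_apply ℤ_[2] ℚ_[2] K]
  exact E.algebraMap_mem _

theorem evalT_eq (x : K) : evalT f x = ∑' n, (A f n : K) * x ^ n := rfl

theorem summable_eval (hK : ∀ x : ℚ_[2], ‖algebraMap ℚ_[2] K x‖ = ‖x‖)
    (E : IntermediateField ℚ_[2] K) (hFD : FiniteDimensional ℚ_[2] E)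
    {x : K} (hxE : x ∈ E) (hx : ‖x‖ < 1) :
    Summable (fun n => (A f n : K) * x ^ n) := by
  refine summable_of_mem_of_tendsto hK E hFD _
    (fun n => mul_mem (A_mem f E n) (pow_mem hxE n)) ?_
  refine squeeze_zero_norm (fun n => ?_) (tendsto_pow_atTop_nhds_zero_of_lt_one (norm_nonneg x) hx)
  rw [norm_mul, norm_pow]
  calc ‖(A f n : K)‖ * ‖x‖ ^ n ≤ 1 * ‖x‖ ^ n := by
        gcongr; exact norm_A_le f hK n
    _ = ‖x‖ ^ n := one_mul _

theorem hasSum_eval (hK : ∀ x : ℚ_[2], ‖algebraMap ℚ_[2] K x‖ = ‖x‖)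
    {x : K} (hx : ‖x‖ < 1) :
    HasSum (fun n => (A f n : K) * x ^ n) (evalT f x) := by
  haveI : FiniteDimensional ℚ_[2] (IntermediateField.adjoin ℚ_[2] {x} : IntermediateField ℚ_[2] K) :=
    IntermediateField.adjoin.finiteDimensional (isIntegral x)
  exact (summable_eval f hK _ this (IntermediateField.mem_adjoin_simple_self ℚ_[2] x) hx).hasSum


/-- Complete homogeneous polynomial `∑_{i≤m} x^i y^{m-i}`. -/
def hpol (m : ℕ) (x y : K) : K := ∑ i ∈ Finset.range (m + 1), x ^ i * y ^ (m - i)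

theorem hpol_mul (m : ℕ) (x y : K) : hpol m x y * (x - y) = x ^ (m + 1) - y ^ (m + 1) := by
  have h := geom_sum₂_mul x y (m + 1)
  simpa [hpol] using h

theorem norm_hpol_le {x y : K} {r : ℝ} (hx : ‖x‖ ≤ r) (hy : ‖y‖ ≤ r) (hr : 0 ≤ r) (m : ℕ) :
    ‖hpol m x y‖ ≤ r ^ m := by
  refine IsUltrametricDist.norm_sum_le_of_forall_le_of_nonneg (pow_nonneg hr m) ?_
  intro i hi
  have him : i ≤ m := Nat.lt_succ_iff.mp (Finset.mem_range.mp hi)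
  rw [norm_mul, norm_pow, norm_pow]
  calc ‖x‖ ^ i * ‖y‖ ^ (m - i) ≤ r ^ i * r ^ (m - i) :=
        mul_le_mul (pow_le_pow_left₀ (norm_nonneg x) hx i)
          (pow_le_pow_left₀ (norm_nonneg y) hy (m - i)) (by positivity) (by positivity)
    _ = r ^ (i + (m - i)) := (pow_add r i (m - i)).symm
    _ = r ^ m := by rw [Nat.add_sub_cancel' him]

theorem hpol_mem {E : IntermediateField ℚ_[2] K} {x y : K} (hx : x ∈ E) (hy : y ∈ E) (m : ℕ) :
    hpol m x y ∈ E :=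
  sum_mem fun i _ => mul_mem (pow_mem hx i) (pow_mem hy (m - i))

theorem eval_sub (hK : ∀ x : ℚ_[2], ‖algebraMap ℚ_[2] K x‖ = ‖x‖)
    (E : IntermediateField ℚ_[2] K) (hFD : FiniteDimensional ℚ_[2] E)
    {x y : K} (hxE : x ∈ E) (hyE : y ∈ E) (hx : ‖x‖ < 1) (hy : ‖y‖ < 1) (hxy : x ≠ y) :
    Summable (fun m => (A f (m + 1) : K) * hpol m x y) ∧
      evalT f x - evalT f y = (x - y) * ∑' m, (A f (m + 1) : K) * hpol m x y := by
  have Sx := summable_eval f hK E hFD hxE hx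
  have Sy := summable_eval f hK E hFD hyE hy
  have hg : Summable (fun n => (A f n : K) * x ^ n - A f n * y ^ n) := Sx.sub Sy
  have hxy0 : x - y ≠ 0 := sub_ne_zero.2 hxy
  set k : ℕ → K := fun n => (x - y)⁻¹ * ((A f n : K) * x ^ n - A f n * y ^ n) with hk
  have hks : Summable k := hg.mul_left _
  have hkk : ∀ m, k (m + 1) = (A f (m + 1) : K) * hpol m x y := by
    intro m
    have h2 : x ^ (m + 1) - y ^ (m + 1) = hpol m x y * (x - y) := (hpol_mul m x y).symm
    simp only [hk, ← mul_sub, h2]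
    field_simp
  have hk0 : k 0 = 0 := by simp [hk]
  have hsum2 : Summable (fun m => (A f (m + 1) : K) * hpol m x y) := by
    have h1 := (summable_nat_add_iff 1).2 hks
    exact h1.congr fun m => hkk m
  refine ⟨hsum2, ?_⟩
  have t1 : evalT f x - evalT f y = ∑' n, ((A f n : K) * x ^ n - A f n * y ^ n) := by
    rw [evalT_eq, evalT_eq, Sx.tsum_sub Sy]
  have t2 : ∑' n, ((A f n : K) * x ^ n - A f n * y ^ n) = (x - y) * ∑' n, k n := by
    rw [← tsum_mul_left]
    exact tsum_congr fun n => by rw [hk]; field_simp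
  have t3 : ∑' n, k n = ∑' m, (A f (m + 1) : K) * hpol m x y := by
    rw [hks.tsum_eq_zero_add, hk0, zero_add]
    exact tsum_congr hkk
  rw [t1, t2, t3]


/-- the root-relation: two distinct roots of `f - w` in the open unit disk give a
vanishing series. -/
theorem rootRel (hK : ∀ x : ℚ_[2], ‖algebraMap ℚ_[2] K x‖ = ‖x‖)
    (E : IntermediateField ℚ_[2] K) (hFD : FiniteDimensional ℚ_[2] E)
    {w x y : K} (hxE : x ∈ E) (hyE : y ∈ E) (hx : ‖x‖ < 1) (hy : ‖y‖ < 1) (hxy : x ≠ y)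
    (ex : evalT f x = w) (ey : evalT f y = w) :
    Summable (fun m => (A f (m + 1) : K) * hpol m x y) ∧
      ∑' m, (A f (m + 1) : K) * hpol m x y = 0 := by
  obtain ⟨hs, he⟩ := eval_sub f hK E hFD hxE hyE hx hy hxy
  refine ⟨hs, ?_⟩
  rw [ex, ey, sub_self] at he
  rcases mul_eq_zero.1 he.symm with h | h
  · exact absurd h (sub_ne_zero.2 hxy)
  · exact h

/-- Strassmann-style: no three distinct roots in the open unit disk when the
second coefficient is a unit. -/
theorem strass (hK : ∀ x : ℚ_[2], ‖algebraMap ℚ_[2] K x‖ = ‖x‖)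
    (hA2 : ‖(A f 2 : K)‖ = 1)
    {w x y z : K} (hx : ‖x‖ < 1) (hy : ‖y‖ < 1) (hz : ‖z‖ < 1)
    (hxy : x ≠ y) (hxz : x ≠ z) (hyz : y ≠ z)
    (ex : evalT f x = w) (ey : evalT f y = w) (ez : evalT f z = w) : False := by
  classical
  set E := IntermediateField.adjoin ℚ_[2] ({x, y, z} : Set K) with hE
  haveI : Finite ↥({x, y, z} : Set K) :=
    (Set.Finite.insert x (Set.Finite.insert y (Set.finite_singleton z))).to_subtype
  haveI hFD : FiniteDimensional ℚ_[2] E :=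
    IntermediateField.finiteDimensional_adjoin fun a _ => isIntegral a
  have hxE : x ∈ E := IntermediateField.subset_adjoin _ _ (by simp)
  have hyE : y ∈ E := IntermediateField.subset_adjoin _ _ (by simp)
  have hzE : z ∈ E := IntermediateField.subset_adjoin _ _ (by simp)
  set r : ℝ := max ‖x‖ (max ‖y‖ ‖z‖) with hr
  have hr0 : 0 ≤ r := le_trans (norm_nonneg x) (le_max_left _ _)
  have hr1 : r < 1 := by
    simp only [hr, max_lt_iff]
    exact ⟨hx, hy, hz⟩
  have hxr : ‖x‖ ≤ r := le_max_left _ _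
  have hyr : ‖y‖ ≤ r := le_trans (le_max_left _ _) (le_max_right _ _)
  have hzr : ‖z‖ ≤ r := le_trans (le_max_right _ _) (le_max_right _ _)
  obtain ⟨S1, g1⟩ := rootRel f hK E hFD hxE hyE hx hy hxy ex ey
  obtain ⟨S2, g2⟩ := rootRel f hK E hFD hxE hzE hx hz hxz ex ez
  -- the difference series
  have hsub : Summable (fun m => (A f (m + 1) : K) * hpol m x z - A f (m + 1) * hpol m x y) :=
    S2.sub S1
  have hzero : ∑' m, ((A f (m + 1) : K) * hpol m x z - A f (m + 1) * hpol m x y) = 0 := by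
    rw [S2.tsum_sub S1, g1, g2, sub_self]
  have hzy0 : z - y ≠ 0 := sub_ne_zero.2 (Ne.symm hyz)
  -- the second difference-quotient
  set H : ℕ → K := fun m => ∑ i ∈ Finset.range (m + 1),
    x ^ i * (∑ l ∈ Finset.range (m - i), z ^ l * y ^ (m - i - 1 - l)) with hH
  have key : ∀ m, hpol m x z - hpol m x y = (z - y) * H m := by
    intro m
    rw [hpol, hpol, ← Finset.sum_sub_distrib, hH, Finset.mul_sum]
    refine Finset.sum_congr rfl fun i _ => ?_
    have hg := geom_sum₂_mul z y (m - i)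
    calc x ^ i * z ^ (m - i) - x ^ i * y ^ (m - i)
        = x ^ i * (z ^ (m - i) - y ^ (m - i)) := by ring
      _ = x ^ i * ((∑ l ∈ Finset.range (m - i), z ^ l * y ^ (m - i - 1 - l)) * (z - y)) := by
          rw [hg]
      _ = (z - y) * (x ^ i * ∑ l ∈ Finset.range (m - i), z ^ l * y ^ (m - i - 1 - l)) := by
          ring
  set k2 : ℕ → K := fun m => (A f (m + 1) : K) * H m with hk2
  have hterm : ∀ m, (A f (m + 1) : K) * hpol m x z - A f (m + 1) * hpol m x y
      = (z - y) * k2 m := by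
    intro m
    rw [← mul_sub, key m, hk2]
    ring
  have hk2s : Summable k2 := by
    have h1 := hsub.mul_left (z - y)⁻¹
    refine h1.congr fun m => ?_
    rw [hterm m]
    field_simp
  have tail0 : ∑' m, k2 m = 0 := by
    have : ∑' m, (z - y) * k2 m = 0 := by
      rw [← hzero]
      exact tsum_congr fun m => (hterm m).symm
    rw [tsum_mul_left] at this
    rcases mul_eq_zero.1 this with h | h
    · exact absurd h hzy0
    · exact h
  have hH0 : H 0 = 0 := by simp [hH]
  have hH1 : H 1 = 1 := by
    simp [hH, Finset.sum_range_succ]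
  have hA2eq : (A f 2 : K) = - ∑' m, k2 (m + 2) := by
    have hk20 : k2 0 = 0 := by simp [hk2, hH0]
    have hk21 : k2 (0 + 1) = (A f 2 : K) := by norm_num [hk2, hH1]
    have hk2s' : Summable (fun m => k2 (m + 1)) := (summable_nat_add_iff 1).2 hk2s
    have e1 := hk2s.tsum_eq_zero_add
    have e2 := hk2s'.tsum_eq_zero_add
    rw [tail0, hk20, zero_add, e2, hk21] at e1
    have e3 : ∑' m, k2 (m + 1 + 1) = ∑' m, k2 (m + 2) := by norm_num
    rw [e3] at e1
    exact eq_neg_of_add_eq_zero_left e1.symm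
  have hHb : ∀ m, ‖H (m + 2)‖ ≤ r ^ (m + 1) := by
    intro m
    simp only [hH]
    refine IsUltrametricDist.norm_sum_le_of_forall_le_of_nonneg (pow_nonneg hr0 _) ?_
    intro i hi
    by_cases hc : m + 2 - i = 0
    · rw [hc]
      simp only [Finset.range_zero, Finset.sum_empty, mul_zero, norm_zero]
      positivity
    · rw [norm_mul, norm_pow]
      have inner_le : ‖∑ l ∈ Finset.range (m + 2 - i), z ^ l * y ^ (m + 2 - i - 1 - l)‖
          ≤ r ^ (m + 2 - i - 1) := by
        refine IsUltrametricDist.norm_sum_le_of_forall_le_of_nonneg (pow_nonneg hr0 _) ?_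
        intro l hl
        have hll : l ≤ m + 2 - i - 1 := by
          have := Finset.mem_range.mp hl
          omega
        rw [norm_mul, norm_pow, norm_pow]
        calc ‖z‖ ^ l * ‖y‖ ^ (m + 2 - i - 1 - l) ≤ r ^ l * r ^ (m + 2 - i - 1 - l) :=
              mul_le_mul (pow_le_pow_left₀ (norm_nonneg z) hzr l)
                (pow_le_pow_left₀ (norm_nonneg y) hyr _) (by positivity) (by positivity)
          _ = r ^ (m + 2 - i - 1) := by
              rw [← pow_add]
              congr 1
              omega
      have hile : i ≤ m + 2 := by
        have := Finset.mem_range.mp hi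
        omega
      calc ‖x‖ ^ i * ‖∑ l ∈ Finset.range (m + 2 - i), z ^ l * y ^ (m + 2 - i - 1 - l)‖
          ≤ r ^ i * r ^ (m + 2 - i - 1) :=
            mul_le_mul (pow_le_pow_left₀ (norm_nonneg x) hxr i) inner_le (norm_nonneg _)
              (by positivity)
        _ = r ^ (m + 1) := by
            rw [← pow_add]
            congr 1
            omega
  have htail : ‖∑' m, k2 (m + 2)‖ ≤ r := by
    refine IsUltrametricDist.norm_tsum_le_of_forall_le_of_nonneg hr0 ?_
    intro m
    simp only [hk2]
    calc ‖(A f (m + 2 + 1) : K) * H (m + 2)‖ ≤ 1 * r ^ (m + 1) := by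
          rw [norm_mul]
          exact mul_le_mul (norm_A_le f hK _) (hHb m) (norm_nonneg _) zero_le_one
      _ = r ^ (m + 1) := one_mul _
      _ ≤ r := pow_le_of_le_one hr0 hr1.le (by omega)
  have hge : (1 : ℝ) ≤ r := by
    rw [← hA2, hA2eq, norm_neg]
    exact htail
  exact absurd (lt_of_le_of_lt hge hr1) (lt_irrefl 1)


theorem tendsto_aut (hK : ∀ x : ℚ_[2], ‖algebraMap ℚ_[2] K x‖ = ‖x‖)
    (σ : K ≃ₐ[ℚ_[2]] K) (E : IntermediateField ℚ_[2] K) (hFD : FiniteDimensional ℚ_[2] E)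
    {ι : Type*} {l : Filter ι} [l.NeBot] (u : ι → K) (L : K)
    (hm : ∀ i, u i ∈ E) (hu : Tendsto u l (𝓝 L)) :
    Tendsto (fun i => σ (u i)) l (𝓝 (σ L)) := by
  letI := nsp hK
  haveI : FiniteDimensional ℚ_[2] E.toSubmodule := hFD
  have hcompl : IsComplete (E.toSubmodule : Set K) := Submodule.complete_of_finiteDimensional _
  have hclosed : IsClosed (E.toSubmodule : Set K) := hcompl.isClosed
  have hL : L ∈ E.toSubmodule := hclosed.mem_of_tendsto hu (Eventually.of_forall hm)
  let T : E.toSubmodule →ₗ[ℚ_[2]] K := σ.toLinearMap.comp E.toSubmodule.subtype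
  have hT : Continuous T := T.continuous_of_finiteDimensional
  have h1 : Tendsto (fun i => (⟨u i, hm i⟩ : E.toSubmodule)) l (𝓝 ⟨L, hL⟩) := by
    rw [tendsto_subtype_rng]
    exact hu
  have h2 := (hT.tendsto _).comp h1
  exact h2

theorem hasSum_aut (hK : ∀ x : ℚ_[2], ‖algebraMap ℚ_[2] K x‖ = ‖x‖)
    (σ : K ≃ₐ[ℚ_[2]] K) (E : IntermediateField ℚ_[2] K) (hFD : FiniteDimensional ℚ_[2] E)
    (u : ℕ → K) (L : K) (hm : ∀ n, u n ∈ E) (hu : HasSum u L) :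
    HasSum (fun n => σ (u n)) (σ L) := by
  have h := tendsto_aut hK σ E hFD (fun s : Finset ℕ => ∑ i ∈ s, u i) L
    (fun s => sum_mem fun i _ => hm i) hu
  have : (fun s : Finset ℕ => σ (∑ i ∈ s, u i)) = fun s : Finset ℕ => ∑ i ∈ s, σ (u i) := by
    funext s
    exact map_sum σ u s
  rw [this] at h
  exact h

theorem aut_norm_lt_one (hK : ∀ x : ℚ_[2], ‖algebraMap ℚ_[2] K x‖ = ‖x‖)
    (σ : K ≃ₐ[ℚ_[2]] K) {x : K} (hx : ‖x‖ < 1) : ‖σ x‖ < 1 := by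
  have hp : Tendsto (fun n => x ^ n) atTop (𝓝 (0 : K)) :=
    tendsto_pow_atTop_nhds_zero_of_norm_lt_one hx
  set E := IntermediateField.adjoin ℚ_[2] ({x} : Set K) with hE
  haveI hFD : FiniteDimensional ℚ_[2] E :=
    IntermediateField.adjoin.finiteDimensional (isIntegral x)
  have hxE : x ∈ E := IntermediateField.mem_adjoin_simple_self ℚ_[2] x
  have h2 := tendsto_aut hK σ E hFD (fun n => x ^ n) 0 (fun n => pow_mem hxE n) hp
  simp only [map_pow, map_zero] at h2
  by_contra hge
  push_neg at hge
  obtain ⟨N, hN⟩ := Metric.tendsto_atTop.1 h2 1 one_pos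
  have := hN N le_rfl
  rw [dist_zero_right, norm_pow] at this
  exact absurd (lt_of_le_of_lt (one_le_pow₀ hge) this) (lt_irrefl 1)

theorem eval_aut (hK : ∀ x : ℚ_[2], ‖algebraMap ℚ_[2] K x‖ = ‖x‖)
    (σ : K ≃ₐ[ℚ_[2]] K) {x : K} (hx : ‖x‖ < 1) :
    evalT f (σ x) = σ (evalT f x) := by
  have hs := hasSum_eval f hK hx
  set E := IntermediateField.adjoin ℚ_[2] ({x} : Set K) with hE
  haveI hFD : FiniteDimensional ℚ_[2] E :=
    IntermediateField.adjoin.finiteDimensional (isIntegral x)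
  have hxE : x ∈ E := IntermediateField.mem_adjoin_simple_self ℚ_[2] x
  have h2 := hasSum_aut hK σ E hFD _ _
    (fun n => mul_mem (A_mem f E n) (pow_mem hxE n)) hs
  have h3 : (fun n => σ ((A f n : K) * x ^ n)) = fun n => (A f n : K) * σ x ^ n := by
    funext n
    rw [map_mul, map_pow]
    congr 1
    rw [A, IsScalarTower.algebraMap_apply ℤ_[2] ℚ_[2] K]
    exact σ.commutes _
  rw [h3] at h2
  exact h2.tsum_eq


theorem fixed_mem_range {x : K} (hfix : ∀ σ : K ≃ₐ[ℚ_[2]] K, σ x = x) :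
    x ∈ Set.range (algebraMap ℚ_[2] K) := by
  haveI := IsAlgClosure.isAlgebraic (R := ℚ_[2]) (K := K)
  haveI : IsAlgClosed K := IsAlgClosure.isAlgClosed ℚ_[2]
  classical
  by_contra hnot
  have hint : IsIntegral ℚ_[2] x := isIntegral x
  have hdeg1 : (minpoly ℚ_[2] x).natDegree ≠ 1 := by
    intro h1
    exact hnot (minpoly.natDegree_eq_one_iff.1 h1)
  have hdegpos : 0 < (minpoly ℚ_[2] x).natDegree := minpoly.natDegree_pos hint
  have hdeg : 2 ≤ (minpoly ℚ_[2] x).natDegree := by omega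
  have hsep : (minpoly ℚ_[2] x).Separable := (minpoly.irreducible hint).separable
  set q := minpoly ℚ_[2] x with hq
  set mq := q.map (algebraMap ℚ_[2] K) with hmq
  have hsplit : mq.Splits := IsAlgClosed.splits mq
  have hcard : mq.roots.card = q.natDegree := by
    rw [← hsplit.natDegree_eq_card_roots, hmq, Polynomial.natDegree_map]
  have hnodup : mq.roots.Nodup := Polynomial.nodup_roots hsep.map
  have hmq0 : mq ≠ 0 := by
    rw [hmq]
    exact Polynomial.map_ne_zero (minpoly.ne_zero hint)
  have hxroot : x ∈ mq.roots := by
    rw [Polynomial.mem_roots hmq0, Polynomial.IsRoot, Polynomial.eval_map,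
      ← Polynomial.aeval_def]
    exact minpoly.aeval ℚ_[2] x
  -- find another root
  have : ∃ y ∈ mq.roots, y ≠ x := by
    by_contra hall
    push_neg at hall
    have hsub : mq.roots.toFinset ⊆ {x} := by
      intro a ha
      rw [Multiset.mem_toFinset] at ha
      simp [hall a ha]
    have hle : mq.roots.toFinset.card ≤ 1 := le_trans (Finset.card_le_card hsub) (by simp)
    rw [Multiset.toFinset_card_of_nodup hnodup, hcard] at hle
    omega
  obtain ⟨y, hyroot, hyx⟩ := this
  have hy : Polynomial.aeval y q = 0 := by
    have := (Polynomial.mem_roots hmq0).1 hyroot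
    rwa [Polynomial.IsRoot, Polynomial.eval_map, ← Polynomial.aeval_def] at this
  obtain ⟨φ, hφ⟩ := IntermediateField.exists_algHom_of_splits_of_aeval
    (fun s : K => ⟨isIntegral s, IsAlgClosed.splits _⟩) hy
  have hbij := Algebra.IsAlgebraic.algHom_bijective φ
  have := hfix (AlgEquiv.ofBijective φ hbij)
  rw [AlgEquiv.coe_ofBijective] at this
  rw [hφ] at this
  exact hyx this


end Stmt8Aux

set_option maxHeartbeats 1000000 in
/-- p = 2. -/
theorem stmt_8
    {K : Type*} [NormedField K] [IsUltrametricDist K]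
    [Algebra ℚ_[2] K] [Algebra ℤ_[2] K] [IsScalarTower ℤ_[2] ℚ_[2] K]
    [IsAlgClosure ℚ_[2] K]
    (hK : ∀ x : ℚ_[2], ‖algebraMap ℚ_[2] K x‖ = ‖x‖)
    (f u : PowerSeries ℤ_[2])
    (hf0 : PowerSeries.coeff 0 f = 0) (hu0 : PowerSeries.coeff 0 u = 0)
    (hcomm : compPS f u = compPS u f)
    (huinv : IsUnit (PowerSeries.coeff 1 u))
    (hunt : ∀ n : ℕ, 0 < n → iterPS u n ≠ PowerSeries.X)
    -- Weierstrass degree of `f` is `2`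
    (hw2 : IsUnit (PowerSeries.coeff 2 f))
    (hwlt : ∀ i < 2, ¬ IsUnit (PowerSeries.coeff i f))
    -- `v_2(f'(0)) = 1`
    (hvf : ‖PowerSeries.coeff 1 f‖ = (2 : ℝ)⁻¹)
    -- `v_2(u'(0) - 1) = 2`
    (hvu : ‖PowerSeries.coeff 1 u - 1‖ = (4 : ℝ)⁻¹)
    -- `α` is the nonzero root of `f`, of valuation `1`
    (α : K) (hα0 : α ≠ 0) (hαm : ‖α‖ < 1) (hαroot : evalT f α = 0)
    (hαv : ‖α‖ = (2 : ℝ)⁻¹)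
    -- `β, β'` are the two roots of `f(x) - α`, of valuation `1/2`
    (β β' : K) (hββ' : β ≠ β') (hβm : ‖β‖ < 1) (hβ'm : ‖β'‖ < 1)
    (hβ : evalT f β = α) (hβ' : evalT f β' = α)
    (hβv : ‖β‖ ^ 2 = (2 : ℝ)⁻¹)
    -- `γ₁, γ₂` are the two roots of `f(x) - β` (the roots of the Eisenstein quadratic
    -- over `Z_2[β]` from the Weierstrass factorization of `f(x) - β`), of valuation `1/4`
    (γ₁ γ₂ : K) (hγγ : γ₁ ≠ γ₂) (hγ₁m : ‖γ₁‖ < 1) (hγ₂m : ‖γ₂‖ < 1)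
    (hγ₁ : evalT f γ₁ = β) (hγ₂ : evalT f γ₂ = β)
    (hγ₁v : ‖γ₁‖ ^ 4 = (2 : ℝ)⁻¹) (hγ₂v : ‖γ₂‖ ^ 4 = (2 : ℝ)⁻¹) :
    -- `v_2(γ₂ - γ₁) ∈ {1/2, 1, 5/4}`
    ‖γ₂ - γ₁‖ ^ 4 = (2 : ℝ) ^ (-2 : ℤ) ∨ ‖γ₂ - γ₁‖ ^ 4 = (2 : ℝ) ^ (-4 : ℤ) ∨
      ‖γ₂ - γ₁‖ ^ 4 = (2 : ℝ) ^ (-5 : ℤ) := by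
  classical
  set s : K := γ₁ + γ₂ with hs
  have hA2 : ‖(Stmt8Aux.A f 2 : K)‖ = 1 := by
    rw [Stmt8Aux.A, Stmt8Aux.normZ hK]
    exact PadicInt.isUnit_iff.1 hw2
  have hF0 : evalT f (0 : K) = 0 := by
    have h1 : (fun n => algebraMap ℤ_[2] K (PowerSeries.coeff n f) * (0 : K) ^ n)
        = fun _ => (0 : K) := by
      funext n
      cases n with
      | zero => simp [hf0]
      | succ n => simp
    rw [evalT, h1, tsum_zero]
  have h0m : ‖(0 : K)‖ < 1 := by simp
  -- the three root-set descriptions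
  have roots0 : ∀ t : K, ‖t‖ < 1 → evalT f t = 0 → t = 0 ∨ t = α := by
    intro t ht hev
    by_contra hcon
    push_neg at hcon
    exact Stmt8Aux.strass f hK hA2 h0m hαm ht (Ne.symm hα0) (Ne.symm hcon.1) (Ne.symm hcon.2)
      hF0 hαroot hev
  have rootsα : ∀ t : K, ‖t‖ < 1 → evalT f t = α → t = β ∨ t = β' := by
    intro t ht hev
    by_contra hcon
    push_neg at hcon
    exact Stmt8Aux.strass f hK hA2 hβm hβ'm ht hββ' (Ne.symm hcon.1) (Ne.symm hcon.2)
      hβ hβ' hev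
  have rootsβ : ∀ t : K, ‖t‖ < 1 → evalT f t = β → t = γ₁ ∨ t = γ₂ := by
    intro t ht hev
    by_contra hcon
    push_neg at hcon
    exact Stmt8Aux.strass f hK hA2 hγ₁m hγ₂m ht hγγ (Ne.symm hcon.1) (Ne.symm hcon.2)
      hγ₁ hγ₂ hev
  -- automorphism action
  have hσα : ∀ σ : K ≃ₐ[ℚ_[2]] K, σ α = α := by
    intro σ
    have h1 := Stmt8Aux.aut_norm_lt_one hK σ hαm
    have h2 : evalT f (σ α) = 0 := by rw [Stmt8Aux.eval_aut f hK σ hαm, hαroot, map_zero]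
    rcases roots0 _ h1 h2 with h | h
    · exact absurd (σ.injective (by rw [h, map_zero])) hα0
    · exact h
  have hσβ : ∀ σ : K ≃ₐ[ℚ_[2]] K, σ β = β ∨ σ β = β' := fun σ =>
    rootsα _ (Stmt8Aux.aut_norm_lt_one hK σ hβm)
      (by rw [Stmt8Aux.eval_aut f hK σ hβm, hβ, hσα σ])
  have hσβ' : ∀ σ : K ≃ₐ[ℚ_[2]] K, σ β' = β ∨ σ β' = β' := fun σ =>
    rootsα _ (Stmt8Aux.aut_norm_lt_one hK σ hβ'm)
      (by rw [Stmt8Aux.eval_aut f hK σ hβ'm, hβ', hσα σ])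
  have pair_sum : ∀ p q a b : K, a ≠ b → (a = p ∨ a = q) → (b = p ∨ b = q) → a + b = p + q := by
    rintro p q a b hab (rfl | rfl) (rfl | rfl)
    · exact absurd rfl hab
    · rfl
    · exact add_comm _ _
    · exact absurd rfl hab
  -- key : s is 0 or has norm² an integer power of 2
  have hKey : s = 0 ∨ ∃ m : ℤ, ‖s‖ ^ 2 = (2 : ℝ) ^ m := by
    have znorm : ∀ q : ℚ_[2], q ≠ 0 → ∃ k : ℤ, ‖q‖ = (2 : ℝ) ^ k := by
      intro q hq
      refine ⟨-q.valuation, ?_⟩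
      rw [Padic.norm_eq_zpow_neg_valuation hq]
      norm_num
    by_cases hex : ∃ σ₀ : K ≃ₐ[ℚ_[2]] K, σ₀ β = β'
    · obtain ⟨σ₀, hσ₀⟩ := hex
      set s' : K := σ₀ γ₁ + σ₀ γ₂ with hs'
      have hγ'1m : ‖σ₀ γ₁‖ < 1 := Stmt8Aux.aut_norm_lt_one hK σ₀ hγ₁m
      have hγ'2m : ‖σ₀ γ₂‖ < 1 := Stmt8Aux.aut_norm_lt_one hK σ₀ hγ₂m
      have he'1 : evalT f (σ₀ γ₁) = β' := by rw [Stmt8Aux.eval_aut f hK σ₀ hγ₁m, hγ₁, hσ₀]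
      have he'2 : evalT f (σ₀ γ₂) = β' := by rw [Stmt8Aux.eval_aut f hK σ₀ hγ₂m, hγ₂, hσ₀]
      have hne' : σ₀ γ₁ ≠ σ₀ γ₂ := fun h => hγγ (σ₀.injective h)
      have rootsβ' : ∀ t : K, ‖t‖ < 1 → evalT f t = β' → t = σ₀ γ₁ ∨ t = σ₀ γ₂ := by
        intro t ht hev
        by_contra hcon
        push_neg at hcon
        exact Stmt8Aux.strass f hK hA2 hγ'1m hγ'2m ht hne' (Ne.symm hcon.1) (Ne.symm hcon.2)
          he'1 he'2 hev
      have hss' : ∀ σ : K ≃ₐ[ℚ_[2]] K, (σ s = s ∧ σ s' = s') ∨ (σ s = s' ∧ σ s' = s) := by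
        intro σ
        have hneg : σ γ₁ ≠ σ γ₂ := fun h => hγγ (σ.injective h)
        have hneg' : σ (σ₀ γ₁) ≠ σ (σ₀ γ₂) := fun h => hne' (σ.injective h)
        have hm1 := Stmt8Aux.aut_norm_lt_one hK σ hγ₁m
        have hm2 := Stmt8Aux.aut_norm_lt_one hK σ hγ₂m
        have hm1' := Stmt8Aux.aut_norm_lt_one hK σ hγ'1m
        have hm2' := Stmt8Aux.aut_norm_lt_one hK σ hγ'2m
        rcases hσβ σ with hb | hb
        · have hb' : σ β' = β' := by
            rcases hσβ' σ with h | h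
            · exact absurd (σ.injective (h.trans hb.symm)) (Ne.symm hββ')
            · exact h
          left
          constructor
          · rw [hs, map_add]
            exact pair_sum γ₁ γ₂ _ _ hneg
              (rootsβ _ hm1 (by rw [Stmt8Aux.eval_aut f hK σ hγ₁m, hγ₁, hb]))
              (rootsβ _ hm2 (by rw [Stmt8Aux.eval_aut f hK σ hγ₂m, hγ₂, hb]))
          · rw [hs', map_add]
            exact pair_sum (σ₀ γ₁) (σ₀ γ₂) _ _ hneg'
              (rootsβ' _ hm1' (by rw [Stmt8Aux.eval_aut f hK σ hγ'1m, he'1, hb']))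
              (rootsβ' _ hm2' (by rw [Stmt8Aux.eval_aut f hK σ hγ'2m, he'2, hb']))
        · have hb' : σ β' = β := by
            rcases hσβ' σ with h | h
            · exact h
            · exact absurd (σ.injective (h.trans hb.symm)) (Ne.symm hββ')
          right
          constructor
          · rw [hs, map_add]
            exact pair_sum (σ₀ γ₁) (σ₀ γ₂) _ _ hneg
              (rootsβ' _ hm1 (by rw [Stmt8Aux.eval_aut f hK σ hγ₁m, hγ₁, hb]))
              (rootsβ' _ hm2 (by rw [Stmt8Aux.eval_aut f hK σ hγ₂m, hγ₂, hb]))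
          · rw [hs', map_add]
            exact pair_sum γ₁ γ₂ _ _ hneg'
              (rootsβ _ hm1' (by rw [Stmt8Aux.eval_aut f hK σ hγ'1m, he'1, hb']))
              (rootsβ _ hm2' (by rw [Stmt8Aux.eval_aut f hK σ hγ'2m, he'2, hb']))
      have hbfix : ∀ σ : K ≃ₐ[ℚ_[2]] K, σ (s + s') = s + s' := by
        intro σ
        rw [map_add]
        rcases hss' σ with ⟨h1, h2⟩ | ⟨h1, h2⟩
        · rw [h1, h2]
        · rw [h1, h2, add_comm]
      have hcfix : ∀ σ : K ≃ₐ[ℚ_[2]] K, σ (s * s') = s * s' := by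
        intro σ
        rw [map_mul]
        rcases hss' σ with ⟨h1, h2⟩ | ⟨h1, h2⟩
        · rw [h1, h2]
        · rw [h1, h2, mul_comm]
      obtain ⟨b0, hb0⟩ := Stmt8Aux.fixed_mem_range hbfix
      obtain ⟨c0, hc0⟩ := Stmt8Aux.fixed_mem_range hcfix
      have hquad : s * s = algebraMap ℚ_[2] K b0 * s - algebraMap ℚ_[2] K c0 := by
        rw [hb0, hc0]
        ring
      by_cases hs0 : s = 0
      · exact Or.inl hs0
      right
      have hsn : 0 < ‖s‖ := norm_pos_iff.2 hs0
      have hnb : ‖algebraMap ℚ_[2] K b0‖ = ‖b0‖ := hK b0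
      have hnc : ‖algebraMap ℚ_[2] K c0‖ = ‖c0‖ := hK c0
      by_cases hbc : ‖algebraMap ℚ_[2] K b0 * s‖ = ‖algebraMap ℚ_[2] K c0‖
      · have hb0' : b0 ≠ 0 := by
          intro h
          rw [h, map_zero, zero_mul, norm_zero] at hbc
          have hc00 : algebraMap ℚ_[2] K c0 = 0 := by rwa [eq_comm, norm_eq_zero] at hbc
          have hss0 : s * s = 0 := by
            rw [hquad, h, hc00]
            simp
          exact hs0 (mul_self_eq_zero.1 hss0)
        have hc0' : c0 ≠ 0 := by
          intro h
          have h0 : ‖algebraMap ℚ_[2] K b0 * s‖ = 0 := by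
            rw [hbc, h, map_zero, norm_zero]
          rcases mul_eq_zero.1 (norm_eq_zero.1 h0) with h' | h'
          · exact hb0' ((map_eq_zero_iff _ (algebraMap ℚ_[2] K).injective).1 h')
          · exact hs0 h'
        obtain ⟨k, hk⟩ := znorm b0 hb0'
        obtain ⟨l, hl⟩ := znorm c0 hc0'
        have hX : ‖s‖ = (2 : ℝ) ^ (l - k) := by
          rw [norm_mul, hnb, hnc, hk, hl] at hbc
          have h2k : (0 : ℝ) < (2 : ℝ) ^ k := zpow_pos (by norm_num) k
          rw [zpow_sub₀ (by norm_num : (2 : ℝ) ≠ 0), eq_div_iff h2k.ne']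
          linarith [hbc]
        refine ⟨(l - k) * 2, ?_⟩
        rw [hX, ← zpow_natCast ((2 : ℝ) ^ (l - k)) 2, ← zpow_mul]
        norm_num
      · have hmax : ‖s * s‖ = max ‖algebraMap ℚ_[2] K b0 * s‖ ‖algebraMap ℚ_[2] K c0‖ := by
          rw [hquad, sub_eq_add_neg,
            IsUltrametricDist.norm_add_eq_max_of_norm_ne_norm (by rwa [norm_neg]), norm_neg]
        rcases lt_or_gt_of_ne hbc with hlt | hgt
        · have hX2 : ‖s‖ ^ 2 = ‖algebraMap ℚ_[2] K c0‖ := by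
            rw [pow_two, ← norm_mul, hmax, max_eq_right hlt.le]
          have hc0' : c0 ≠ 0 := by
            intro h
            have h0 : ‖s‖ ^ 2 = 0 := by rw [hX2, h, map_zero, norm_zero]
            exact hs0 (norm_eq_zero.1 ((pow_eq_zero_iff (by norm_num : (2 : ℕ) ≠ 0)).1 h0))
          obtain ⟨l, hl⟩ := znorm c0 hc0'
          exact ⟨l, by rw [hX2, hnc, hl]⟩
        · have hX : ‖s‖ = ‖b0‖ := by
            have h1 : ‖s‖ * ‖s‖ = ‖b0‖ * ‖s‖ := by
              rw [← norm_mul, hmax, max_eq_left hgt.le, norm_mul, hnb]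
            exact mul_right_cancel₀ hsn.ne' h1
          have hb0' : b0 ≠ 0 := by
            intro h
            rw [h, norm_zero] at hX
            exact hs0 (norm_eq_zero.1 hX)
          obtain ⟨k, hk⟩ := znorm b0 hb0'
          refine ⟨k * 2, ?_⟩
          rw [hX, hk, ← zpow_natCast ((2 : ℝ) ^ k) 2, ← zpow_mul]
          norm_num
    · have hfix : ∀ σ : K ≃ₐ[ℚ_[2]] K, σ s = s := by
        intro σ
        have hb : σ β = β := by
          rcases hσβ σ with h | h
          · exact h
          · exact absurd ⟨σ, h⟩ hex
        rw [hs, map_add]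
        have hm1 := Stmt8Aux.aut_norm_lt_one hK σ hγ₁m
        have hm2 := Stmt8Aux.aut_norm_lt_one hK σ hγ₂m
        have hneg : σ γ₁ ≠ σ γ₂ := fun h => hγγ (σ.injective h)
        exact pair_sum γ₁ γ₂ _ _ hneg
          (rootsβ _ hm1 (by rw [Stmt8Aux.eval_aut f hK σ hγ₁m, hγ₁, hb]))
          (rootsβ _ hm2 (by rw [Stmt8Aux.eval_aut f hK σ hγ₂m, hγ₂, hb]))
      obtain ⟨q, hq⟩ := Stmt8Aux.fixed_mem_range hfix
      by_cases hq0 : q = 0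
      · left
        rw [← hq, hq0, map_zero]
      · right
        obtain ⟨k, hk⟩ := znorm q hq0
        refine ⟨k * 2, ?_⟩
        rw [← hq, hK, hk, ← zpow_natCast ((2 : ℝ) ^ k) 2, ← zpow_mul]
        norm_num
  -- endgame
  have hd4 : ‖γ₂ - γ₁‖ ^ 4 = ‖(γ₂ - γ₁) * (γ₂ - γ₁)‖ ^ 2 := by
    rw [norm_mul, ← pow_two, ← pow_mul]
  have hdd : (γ₂ - γ₁) * (γ₂ - γ₁) = s * s - 4 * (γ₁ * γ₂) := by
    rw [hs]
    ring
  have hPnorm : ‖(4 : K) * (γ₁ * γ₂)‖ ^ 4 = (2 : ℝ) ^ (-10 : ℤ) := by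
    have h4K : (4 : K) = algebraMap ℚ_[2] K 4 := by
      rw [map_ofNat]
    have h2q : ‖(2 : ℚ_[2])‖ = 2⁻¹ := by
      have := Padic.norm_p (p := 2)
      simpa using this
    have h4 : ‖(4 : K)‖ = 4⁻¹ := by
      rw [h4K, hK, show (4 : ℚ_[2]) = 2 * 2 by norm_num, norm_mul, h2q]
      norm_num
    rw [norm_mul, norm_mul, mul_pow, mul_pow, h4, hγ₁v, hγ₂v]
    norm_num
  have hY0 : (0 : ℝ) ≤ ‖(4 : K) * (γ₁ * γ₂)‖ := norm_nonneg _
  have hYsq : ‖(4 : K) * (γ₁ * γ₂)‖ ^ 2 = (2 : ℝ) ^ (-5 : ℤ) := by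
    have e10 : (2 : ℝ) ^ (-10 : ℤ) = 1 / 1024 := by norm_num
    have e5 : (2 : ℝ) ^ (-5 : ℤ) = 1 / 32 := by norm_num
    rw [e5]
    rw [e10] at hPnorm
    have hfac : (‖(4 : K) * (γ₁ * γ₂)‖ ^ 2 - 1 / 32) * (‖(4 : K) * (γ₁ * γ₂)‖ ^ 2 + 1 / 32)
        = 0 := by
      calc (‖(4 : K) * (γ₁ * γ₂)‖ ^ 2 - 1 / 32) * (‖(4 : K) * (γ₁ * γ₂)‖ ^ 2 + 1 / 32)
          = ‖(4 : K) * (γ₁ * γ₂)‖ ^ 4 - 1 / 1024 := by ring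
        _ = 0 := by rw [hPnorm]; norm_num
    rcases mul_eq_zero.1 hfac with h | h
    · linarith
    · linarith [sq_nonneg ‖(4 : K) * (γ₁ * γ₂)‖]
  have hs4 : ‖s‖ ^ 4 ≤ 2⁻¹ := by
    have h1 : ‖s‖ ≤ max ‖γ₁‖ ‖γ₂‖ := IsUltrametricDist.norm_add_le_max γ₁ γ₂
    rcases le_total ‖γ₁‖ ‖γ₂‖ with h | h
    · rw [max_eq_right h] at h1
      calc ‖s‖ ^ 4 ≤ ‖γ₂‖ ^ 4 := pow_le_pow_left₀ (norm_nonneg s) h1 4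
        _ = 2⁻¹ := hγ₂v
    · rw [max_eq_left h] at h1
      calc ‖s‖ ^ 4 ≤ ‖γ₁‖ ^ 4 := pow_le_pow_left₀ (norm_nonneg s) h1 4
        _ = 2⁻¹ := hγ₁v
  rcases hKey with hs0 | ⟨m, hm⟩
  · -- s = 0 : ‖d·d‖ = ‖4γ₁γ₂‖
    right; right
    rw [hd4, hdd, hs0]
    simp only [zero_mul, zero_sub, norm_neg]
    exact hYsq
  · -- compare X² = 2^m with Y
    have hm1 : m ≤ -1 := by
      have h1 : ((2 : ℝ) ^ m) ^ 2 ≤ 2⁻¹ := by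
        rw [← hm, ← pow_mul]
        calc ‖s‖ ^ (2 * 2) = ‖s‖ ^ 4 := by norm_num
          _ ≤ 2⁻¹ := hs4
      have h2 : (2 : ℝ) ^ (m * 2) ≤ (2 : ℝ) ^ (-1 : ℤ) := by
        rw [← zpow_natCast ((2 : ℝ) ^ m) 2, ← zpow_mul] at h1
        calc (2 : ℝ) ^ (m * 2) ≤ 2⁻¹ := by exact_mod_cast h1
          _ = (2 : ℝ) ^ (-1 : ℤ) := by norm_num
      have := (zpow_le_zpow_iff_right₀ (by norm_num : (1 : ℝ) < 2)).1 h2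
      omega
    have hXsq : ‖s‖ ^ 2 * ‖s‖ ^ 2 = (2 : ℝ) ^ (m * 2) := by
      rw [hm, ← zpow_add₀ (by norm_num : (2 : ℝ) ≠ 0)]
      congr 1
      ring
    have hss : ‖s * s‖ = (2 : ℝ) ^ m := by
      rw [norm_mul, ← pow_two]
      exact hm
    rcases le_or_gt m (-3) with hm3 | hm3
    · -- X² < Y
      right; right
      have hlt : ‖s * s‖ < ‖(4 : K) * (γ₁ * γ₂)‖ := by
        have h1 : ‖s * s‖ ^ 2 < ‖(4 : K) * (γ₁ * γ₂)‖ ^ 2 := by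
          rw [hYsq, hss, ← zpow_natCast ((2 : ℝ) ^ m) 2, ← zpow_mul]
          have : m * 2 ≤ -6 := by omega
          calc (2 : ℝ) ^ (m * (2 : ℕ) : ℤ) ≤ (2 : ℝ) ^ (-6 : ℤ) := by
                apply zpow_le_zpow_right₀ (by norm_num : (1 : ℝ) ≤ 2)
                exact_mod_cast this
            _ < (2 : ℝ) ^ (-5 : ℤ) := by
                apply zpow_lt_zpow_right₀ (by norm_num : (1 : ℝ) < 2)
                omega
        exact lt_of_pow_lt_pow_left₀ 2 hY0 h1
      rw [hd4, hdd, sub_eq_add_neg,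
        IsUltrametricDist.norm_add_eq_max_of_norm_ne_norm (by rw [norm_neg]; exact hlt.ne),
        norm_neg, max_eq_right hlt.le]
      exact hYsq
    · -- Y < X²
      have hgt : ‖(4 : K) * (γ₁ * γ₂)‖ < ‖s * s‖ := by
        have h1 : ‖(4 : K) * (γ₁ * γ₂)‖ ^ 2 < ‖s * s‖ ^ 2 := by
          rw [hYsq, hss, ← zpow_natCast ((2 : ℝ) ^ m) 2, ← zpow_mul]
          apply zpow_lt_zpow_right₀ (by norm_num : (1 : ℝ) < 2)
          have : -2 ≤ m := hm3
          omega
        exact lt_of_pow_lt_pow_left₀ 2 (norm_nonneg _) h1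
      have hdX : ‖γ₂ - γ₁‖ ^ 4 = (2 : ℝ) ^ (m * 2) := by
        rw [hd4, hdd, sub_eq_add_neg,
          IsUltrametricDist.norm_add_eq_max_of_norm_ne_norm
            (by rw [norm_neg]; exact hgt.ne'), norm_neg, max_eq_left hgt.le, hss,
          ← zpow_natCast ((2 : ℝ) ^ m) 2, ← zpow_mul]
        norm_num
      interval_cases m
      · right; left
        rw [hdX]
        norm_num
      · left
        rw [hdX]
        norm_num

end
end

section
/- Let p be a prime, h₁, h₂ ∈ Z_p[[x]], k a positive integer, and (π_n) a sequence of elements in the maximal ideal of the integral closure of Z_p in an algebraic closure of Q_p with v_p(π_n) → 0. If h₁(π_n) ≡ h₂(π_n) mod π_n^k (in the ring of integers) for infinitely many n, then the reductions mod p satisfy h̄₁(x) ≡ h̄₂(x) mod x^k in F_p[[x]]. -/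
open PowerSeries Filter

noncomputable section

theorem stmt_11 (p : ℕ) [Fact p.Prime]
    {K : Type*} [NormedField K] [IsUltrametricDist K]
    [Algebra ℚ_[p] K] [Algebra ℤ_[p] K] [IsScalarTower ℤ_[p] ℚ_[p] K]
    [IsAlgClosure ℚ_[p] K]
    (hK : ∀ x : ℚ_[p], ‖algebraMap ℚ_[p] K x‖ = ‖x‖)
    (h₁ h₂ : PowerSeries ℤ_[p]) (k : ℕ) (hk : 0 < k)
    -- a sequence `π_n` in the maximal ideal with `v_p(π_n) → 0`
    (π : ℕ → K) (hπ0 : ∀ n, π n ≠ 0) (hπm : ∀ n, ‖π n‖ < 1)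
    (hπv : Tendsto (fun n => ‖π n‖) atTop (nhds 1))
    -- `h₁(π_n) ≡ h₂(π_n) mod π_n^k` for infinitely many `n`
    (hcong : {n : ℕ | ‖evalT h₁ (π n) - evalT h₂ (π n)‖ ≤ ‖π n‖ ^ k}.Infinite) :
    -- `h̄₁ ≡ h̄₂ mod x^k` in `F_p[[x]]`
    ∀ i < k, PadicInt.toZMod (PowerSeries.coeff i h₁) =
      PadicInt.toZMod (PowerSeries.coeff i h₂) := by
  classical
  haveI : Algebra.IsAlgebraic ℚ_[p] K := IsAlgClosure.isAlgebraic
  letI : NormedSpace ℚ_[p] K :=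
    { norm_smul_le := fun c y => by rw [Algebra.smul_def, norm_mul, hK] }
  -- norm of the algebra map from ℤ_[p]
  have hnormZ : ∀ a : ℤ_[p], ‖algebraMap ℤ_[p] K a‖ = ‖a‖ := by
    intro a
    rw [IsScalarTower.algebraMap_apply ℤ_[p] ℚ_[p] K, hK]
    rfl
  -- summability of the evaluation series
  have hsummable : ∀ (h : PowerSeries ℤ_[p]) (x : K), ‖x‖ < 1 →
      Summable (fun j : ℕ => algebraMap ℤ_[p] K (PowerSeries.coeff j h) * x ^ j) := by
    intro h x hx
    have hint : IsIntegral ℚ_[p] x := (Algebra.IsAlgebraic.isAlgebraic x).isIntegral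
    let L : IntermediateField ℚ_[p] K := IntermediateField.adjoin ℚ_[p] {x}
    haveI hfd : FiniteDimensional ℚ_[p] L := IntermediateField.adjoin.finiteDimensional hint
    let S : Submodule ℚ_[p] K := Subalgebra.toSubmodule L.toSubalgebra
    haveI hfdS : FiniteDimensional ℚ_[p] S := FiniteDimensional.subalgebra_toSubmodule hfd
    haveI : CompleteSpace S := FiniteDimensional.complete ℚ_[p] S
    have hmem : ∀ j : ℕ, algebraMap ℤ_[p] K (PowerSeries.coeff j h) * x ^ j ∈ L := by
      intro j
      refine mul_mem ?_ (pow_mem (IntermediateField.mem_adjoin_simple_self ℚ_[p] x) j)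
      rw [IsScalarTower.algebraMap_apply ℤ_[p] ℚ_[p] K]
      exact L.algebraMap_mem _
    set g : ℕ → S := fun j => ⟨_, hmem j⟩ with hg
    have hterm : ∀ j : ℕ, ‖algebraMap ℤ_[p] K (PowerSeries.coeff j h) * x ^ j‖ ≤ ‖x‖ ^ j := by
      intro j
      rw [norm_mul, norm_pow, hnormZ]
      exact mul_le_of_le_one_left (by positivity) (PadicInt.norm_le_one _)
    have hgsum : Summable g := by
      refine Summable.of_norm ?_
      refine Summable.of_nonneg_of_le (fun j => norm_nonneg _) (fun j => ?_)
        (summable_geometric_of_lt_one (norm_nonneg x) hx)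
      exact hterm j
    have := hgsum.map (S.subtype) continuous_subtype_val
    exact this
  -- main argument
  by_contra hcontra
  push_neg at hcontra
  obtain ⟨i, hik, hine⟩ := hcontra
  -- minimal bad index
  have hQ : ∃ m : ℕ, m < k ∧ PadicInt.toZMod (PowerSeries.coeff m h₁) ≠
      PadicInt.toZMod (PowerSeries.coeff m h₂) := ⟨i, hik, hine⟩
  set i₀ := Nat.find hQ with hi₀
  obtain ⟨hi₀k, hi₀ne⟩ := Nat.find_spec hQ
  set a : ℕ → ℤ_[p] := fun j => PowerSeries.coeff j (h₁ - h₂) with ha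
  have ha' : ∀ j, a j = PowerSeries.coeff j h₁ - PowerSeries.coeff j h₂ := by
    intro j; simp [ha]
  -- norm facts about coefficients
  have hdvd_iff : ∀ b : ℤ_[p], PadicInt.toZMod b = 0 ↔ (p : ℤ_[p]) ∣ b := by
    intro b
    rw [← RingHom.mem_ker, PadicInt.ker_toZMod, PadicInt.maximalIdeal_eq_span_p,
      Ideal.mem_span_singleton]
  have hai₀ : ‖a i₀‖ = 1 := by
    refine le_antisymm (PadicInt.norm_le_one _) ?_
    by_contra hlt
    push_neg at hlt
    rw [PadicInt.norm_lt_one_iff_dvd, ← hdvd_iff] at hlt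
    apply hi₀ne
    rw [ha', map_sub, sub_eq_zero] at hlt
    exact hlt
  have hasmall : ∀ j < i₀, ‖a j‖ ≤ (p : ℝ)⁻¹ := by
    intro j hj
    have hne := Nat.find_min hQ hj
    push_neg at hne
    have heq := hne (lt_trans hj hi₀k)
    have : (p : ℤ_[p]) ∣ a j := by
      rw [← hdvd_iff, ha', map_sub, sub_eq_zero]; exact heq
    obtain ⟨c, hc⟩ := this
    rw [hc, norm_mul, PadicInt.norm_p]
    exact mul_le_of_le_one_right (by positivity) (PadicInt.norm_le_one _)
  -- choose a good n
  have hpinv : (p : ℝ)⁻¹ < 1 := by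
    have hp1 : (1 : ℝ) < p := by exact_mod_cast (Fact.out : p.Prime).one_lt
    rw [inv_lt_one_iff₀]; right; exact hp1
  have hev : ∀ᶠ n in atTop, (p : ℝ)⁻¹ < ‖π n‖ ^ i₀ := by
    have h1 : Tendsto (fun n => ‖π n‖ ^ i₀) atTop (nhds 1) := by
      simpa using hπv.pow i₀
    exact h1.eventually (eventually_gt_nhds hpinv)
  obtain ⟨n, hn1, hn2⟩ :=
    ((Nat.frequently_atTop_iff_infinite.mpr hcong).and_eventually hev).exists
  set x := π n with hx
  have hx0 : 0 < ‖x‖ := norm_pos_iff.mpr (hπ0 n)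
  have hx1 : ‖x‖ < 1 := hπm n
  set t : ℕ → K := fun j => algebraMap ℤ_[p] K (a j) * x ^ j with ht
  have hs1 := hsummable h₁ x hx1
  have hs2 := hsummable h₂ x hx1
  have hst : Summable t := hsummable (h₁ - h₂) x hx1
  have hdiff : evalT h₁ x - evalT h₂ x = ∑' j, t j := by
    rw [evalT, evalT, ← Summable.tsum_sub hs1 hs2]
    congr 1
    funext j
    rw [ht]
    simp only [ha', map_sub, sub_mul]
  have hTbound : ‖∑' j, t j‖ ≤ ‖x‖ ^ k := by
    rw [← hdiff]; exact hn1
  -- split off the i₀ term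
  have hsplit : (∑' j, t j) = t i₀ + ∑' j, if j = i₀ then 0 else t j :=
    Summable.tsum_eq_add_tsum_ite hst i₀
  set M : ℝ := max ((p : ℝ)⁻¹) (‖x‖ ^ (i₀ + 1)) with hM
  have hRbound : ‖∑' j, if j = i₀ then 0 else t j‖ ≤ M := by
    refine IsUltrametricDist.norm_tsum_le_of_forall_le_of_nonneg
      (le_max_of_le_left (by positivity)) (fun j => ?_)
    by_cases hj : j = i₀
    · rw [if_pos hj, norm_zero]; positivity
    · rw [if_neg hj]
      have htj : ‖t j‖ = ‖a j‖ * ‖x‖ ^ j := by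
        rw [ht]; simp only; rw [norm_mul, norm_pow, hnormZ]
      rcases lt_or_gt_of_ne hj with hlt | hgt
      · refine le_max_of_le_left ?_
        rw [htj]
        calc ‖a j‖ * ‖x‖ ^ j ≤ (p : ℝ)⁻¹ * 1 :=
              mul_le_mul (hasmall j hlt) (pow_le_one₀ (norm_nonneg _) hx1.le)
                (by positivity) (by positivity)
          _ = (p : ℝ)⁻¹ := mul_one _
      · refine le_max_of_le_right ?_
        rw [htj]
        calc ‖a j‖ * ‖x‖ ^ j ≤ 1 * ‖x‖ ^ j :=
              mul_le_mul_of_nonneg_right (PadicInt.norm_le_one _) (by positivity)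
          _ = ‖x‖ ^ j := one_mul _
          _ ≤ ‖x‖ ^ (i₀ + 1) := pow_le_pow_of_le_one (norm_nonneg _) hx1.le hgt
  have hti₀ : ‖t i₀‖ = ‖x‖ ^ i₀ := by
    rw [ht]; simp only; rw [norm_mul, norm_pow, hnormZ, hai₀, one_mul]
  have hMlt : M < ‖x‖ ^ i₀ := by
    rw [hM, max_lt_iff]
    exact ⟨hn2, pow_lt_pow_right_of_lt_one₀ hx0 hx1 (Nat.lt_succ_self i₀)⟩
  have hklt : ‖x‖ ^ k < ‖x‖ ^ i₀ := pow_lt_pow_right_of_lt_one₀ hx0 hx1 hi₀k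
  have hfinal : ‖t i₀‖ < ‖x‖ ^ i₀ := by
    have heq : t i₀ = (∑' j, t j) + (-(∑' j, if j = i₀ then 0 else t j)) := by
      rw [hsplit]; ring
    calc ‖t i₀‖ ≤ max ‖∑' j, t j‖ ‖-(∑' j, if j = i₀ then 0 else t j)‖ := by
          rw [heq]; exact IsUltrametricDist.norm_add_le_max _ _
      _ ≤ max (‖x‖ ^ k) M := by
          rw [norm_neg]; exact max_le_max hTbound hRbound
      _ < ‖x‖ ^ i₀ := max_lt hklt hMlt
  rw [hti₀] at hfinal
  exact lt_irrefl _ hfinal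

end
end

section
/- Let p be a prime, g ∈ Z_p[[x]] invertible under composition (g(0)=0, g'(0) ∈ Z_p^×), and under the hypotheses of the previous setting (u with Weierstrass degree of u^{∘p^{n−δ}}(x)−x equal to p^n, π with v_p(π)=1/((p−1)p^n)), for each unit c ∈ Z_p^× there exists a unique integer 1 ≤ j ≤ p−1 such that g(u^{∘jp^{n−δ}}(π)) − g(π) ≡ c·π^{p^n} mod π^{p^n+1}. -/
open PowerSeries Filter

noncomputable section

section General

variable {p : ℕ} [hp : Fact p.Prime] {F : Type*} [NormedField F] [CompleteSpace F]
  [IsUltrametricDist F]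

/-- Evaluation of a `ℤ_p`-power series in `F` through a ring hom `ρ`. -/
def evR (ρ : ℤ_[p] →+* F) (f : PowerSeries ℤ_[p]) (x : F) : F :=
  ∑' n : ℕ, ρ (PowerSeries.coeff n f) * x ^ n

variable {ρ : ℤ_[p] →+* F}

lemma norm_term_le (hρ : ∀ a : ℤ_[p], ‖ρ a‖ ≤ 1) (f : PowerSeries ℤ_[p]) (x : F) (n : ℕ) :
    ‖ρ (PowerSeries.coeff n f) * x ^ n‖ ≤ ‖x‖ ^ n := by
  rw [norm_mul, norm_pow]
  exact mul_le_of_le_one_left (by positivity) (hρ _)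

lemma summable_evR (hρ : ∀ a : ℤ_[p], ‖ρ a‖ ≤ 1) (f : PowerSeries ℤ_[p]) {x : F} (hx : ‖x‖ < 1) :
    Summable fun n : ℕ => ρ (PowerSeries.coeff n f) * x ^ n :=
  Summable.of_norm_bounded (summable_geometric_of_lt_one (norm_nonneg x) hx)
    (norm_term_le hρ f x)

lemma hasSum_evR (hρ : ∀ a : ℤ_[p], ‖ρ a‖ ≤ 1) (f : PowerSeries ℤ_[p]) {x : F} (hx : ‖x‖ < 1) :
    HasSum (fun n : ℕ => ρ (PowerSeries.coeff n f) * x ^ n) (evR ρ f x) :=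
  (summable_evR hρ f hx).hasSum

lemma norm_evR_le (f : PowerSeries ℤ_[p]) (x : F) {C : ℝ} (hC : 0 ≤ C)
    (h : ∀ n : ℕ, ‖ρ (PowerSeries.coeff n f) * x ^ n‖ ≤ C) : ‖evR ρ f x‖ ≤ C :=
  IsUltrametricDist.norm_tsum_le_of_forall_le_of_nonneg hC h

lemma evR_X (x : F) : evR ρ X x = x := by
  rw [evR, tsum_eq_single 1 (fun n hn => by
    rw [PowerSeries.coeff_X, if_neg hn, map_zero, zero_mul])]
  simp

lemma evR_monomial (m : ℕ) (a : ℤ_[p]) (x : F) :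
    evR ρ (PowerSeries.monomial m a) x = ρ a * x ^ m := by
  rw [evR, tsum_eq_single m (fun n hn => by
    simp [PowerSeries.coeff_monomial, hn])]
  simp [PowerSeries.coeff_monomial]

lemma evR_sub (hρ : ∀ a : ℤ_[p], ‖ρ a‖ ≤ 1) (f g : PowerSeries ℤ_[p]) {x : F} (hx : ‖x‖ < 1) :
    evR ρ (f - g) x = evR ρ f x - evR ρ g x := by
  have h := (hasSum_evR hρ f hx).sub (hasSum_evR hρ g hx)
  rw [evR]
  refine HasSum.tsum_eq ?_
  convert h using 2 with n
  · rfl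
  rw [map_sub, map_sub, sub_mul]

lemma summable_norm_evR (hρ : ∀ a : ℤ_[p], ‖ρ a‖ ≤ 1) (f : PowerSeries ℤ_[p]) {x : F} (hx : ‖x‖ < 1) :
    Summable fun n : ℕ => ‖ρ (PowerSeries.coeff n f) * x ^ n‖ :=
  Summable.of_nonneg_of_le (fun _ => norm_nonneg _) (norm_term_le hρ f x)
    (summable_geometric_of_lt_one (norm_nonneg x) hx)

set_option maxHeartbeats 1000000 in
lemma evR_mul (hρ : ∀ a : ℤ_[p], ‖ρ a‖ ≤ 1) (f g : PowerSeries ℤ_[p]) {x : F} (hx : ‖x‖ < 1) :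
    evR ρ (f * g) x = evR ρ f x * evR ρ g x := by
  have hmul := summable_mul_of_summable_norm (summable_norm_evR hρ f hx) (summable_norm_evR hρ g hx)
  have key := Summable.tsum_mul_tsum_eq_tsum_sum_antidiagonal (summable_evR hρ f hx) (summable_evR hρ g hx) hmul
  rw [evR, evR, evR, key]
  refine tsum_congr fun n => ?_
  rw [PowerSeries.coeff_mul, map_sum, Finset.sum_mul]
  refine Finset.sum_congr rfl fun kl hkl => ?_
  rw [Finset.HasAntidiagonal.mem_antidiagonal] at hkl
  rw [map_mul, ← hkl, pow_add]
  ring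

lemma evR_one (x : F) : evR ρ (1 : PowerSeries ℤ_[p]) x = 1 := by
  rw [evR, tsum_eq_single 0 (fun n hn => by
    rw [PowerSeries.coeff_one, if_neg hn, map_zero, zero_mul])]
  simp

lemma evR_pow (hρ : ∀ a : ℤ_[p], ‖ρ a‖ ≤ 1) (f : PowerSeries ℤ_[p]) (k : ℕ) {x : F} (hx : ‖x‖ < 1) :
    evR ρ (f ^ k) x = (evR ρ f x) ^ k := by
  induction k with
  | zero => simpa using evR_one (ρ := ρ) x
  | succ k ih => rw [pow_succ, pow_succ, evR_mul hρ _ _ hx, ih]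


lemma coeff_pow_eq_zero {g : PowerSeries ℤ_[p]} (hg0 : PowerSeries.coeff 0 g = 0)
    {m k : ℕ} (h : m < k) : PowerSeries.coeff m (g ^ k) = 0 := by
  have hd : (X : PowerSeries ℤ_[p]) ∣ g := by
    rw [PowerSeries.X_dvd_iff]
    simpa using hg0
  have : (X : PowerSeries ℤ_[p]) ^ k ∣ g ^ k := pow_dvd_pow_of_dvd hd k
  exact (PowerSeries.X_pow_dvd_iff.mp this) m h

lemma norm_evR_le_norm (hρ : ∀ a : ℤ_[p], ‖ρ a‖ ≤ 1) {f : PowerSeries ℤ_[p]} (hf0 : PowerSeries.coeff 0 f = 0)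
    {x : F} (hx : ‖x‖ ≤ 1) : ‖evR ρ f x‖ ≤ ‖x‖ := by
  refine norm_evR_le f x (norm_nonneg x) fun n => ?_
  match n with
  | 0 => simp [hf0]
  | (m + 1) =>
    refine (norm_term_le hρ f x _).trans ?_
    calc ‖x‖ ^ (m + 1) ≤ ‖x‖ ^ 1 :=
      pow_le_pow_of_le_one (norm_nonneg x) hx (by omega)
    _ = ‖x‖ := pow_one _

lemma coeff_zero_compPS (f g : PowerSeries ℤ_[p]) :
    PowerSeries.coeff 0 (compPS f g) = PowerSeries.coeff 0 f := by
  simp [compPS]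

lemma coeff_zero_iterPS {u : PowerSeries ℤ_[p]} (hu0 : PowerSeries.coeff 0 u = 0)
    (m : ℕ) : PowerSeries.coeff 0 (iterPS u m) = 0 := by
  induction m with
  | zero => simp [iterPS]
  | succ m _ => rw [iterPS, coeff_zero_compPS, hu0]

lemma evR_comp (hρ : ∀ a : ℤ_[p], ‖ρ a‖ ≤ 1) (f : PowerSeries ℤ_[p]) {g : PowerSeries ℤ_[p]}
    (hg0 : PowerSeries.coeff 0 g = 0) {x : F} (hx : ‖x‖ < 1) :
    evR ρ (compPS f g) x = evR ρ f (evR ρ g x) := by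
  set y := evR ρ g x with hy_def
  have hy : ‖y‖ < 1 := lt_of_le_of_lt (norm_evR_le_norm hρ hg0 hx.le) hx
  set A : ℕ × ℕ → F := fun z =>
    ρ (PowerSeries.coeff z.2 f) * (ρ (PowerSeries.coeff z.1 (g ^ z.2)) * x ^ z.1)
    with hA_def
  set r : ℝ := Real.sqrt ‖x‖ with hr
  have hr0 : 0 ≤ r := Real.sqrt_nonneg _
  have hr1 : r < 1 := by
    rw [hr, show (1:ℝ) = Real.sqrt 1 by simp]
    exact Real.sqrt_lt_sqrt (norm_nonneg x) hx
  have hxr : ‖x‖ = r ^ 2 := by rw [hr, Real.sq_sqrt (norm_nonneg x)]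
  have hAbound : ∀ z : ℕ × ℕ, ‖A z‖ ≤ r ^ z.1 * r ^ z.2 := by
    rintro ⟨m, k⟩
    rcases lt_or_ge m k with h | h
    · simp only [hA_def, coeff_pow_eq_zero hg0 h, map_zero, zero_mul, mul_zero, norm_zero]
      exact mul_nonneg (pow_nonneg hr0 _) (pow_nonneg hr0 _)
    · have h1 : ‖A (m, k)‖ ≤ ‖x‖ ^ m := by
        simp only [hA_def, norm_mul, norm_pow]
        calc ‖ρ (PowerSeries.coeff k f)‖ * (‖ρ (PowerSeries.coeff m (g ^ k))‖ * ‖x‖ ^ m)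
            ≤ 1 * (1 * ‖x‖ ^ m) := by
              gcongr <;> [exact hρ _; exact hρ _]
          _ = ‖x‖ ^ m := by ring
      refine h1.trans ?_
      rw [hxr, ← pow_mul, ← pow_add]
      exact pow_le_pow_of_le_one hr0 hr1.le (by omega)
  have hgeom : Summable fun z : ℕ × ℕ => r ^ z.1 * r ^ z.2 :=
    (summable_geometric_of_lt_one hr0 hr1).mul_of_nonneg
      (summable_geometric_of_lt_one hr0 hr1) (fun _ => pow_nonneg hr0 _) (fun _ => pow_nonneg hr0 _)
  have hA : Summable A := Summable.of_norm_bounded hgeom hAbound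
  have hrow : ∀ m : ℕ, Summable fun k => A (m, k) := fun m => hA.prod_factor m
  have hcol : ∀ k : ℕ, Summable fun m => A (m, k) := by
    intro k
    have := (hA.prod_symm).prod_factor k
    simpa using this
  -- first identification
  have h1 : evR ρ (compPS f g) x = ∑' z : ℕ × ℕ, A z := by
    rw [evR, Summable.tsum_prod' hA hrow]
    refine tsum_congr fun m => ?_
    have : (∑' k : ℕ, A (m, k)) = ∑ k ∈ Finset.range (m + 1), A (m, k) := by
      refine tsum_eq_sum fun k hk => ?_
      have hmk : m < k := by
        rcases lt_or_ge m k with h | h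
        · exact h
        · exact absurd (Finset.mem_range.mpr (by omega)) hk
      simp [hA_def, coeff_pow_eq_zero hg0 hmk]

    rw [this, compPS, PowerSeries.coeff_mk, map_sum, Finset.sum_mul]
    refine Finset.sum_congr rfl fun k _ => ?_
    simp only [hA_def, map_mul]
    ring
  -- second identification
  have hsw : Summable fun z : ℕ × ℕ => A (z.2, z.1) := hA.prod_symm
  have h2 : (∑' z : ℕ × ℕ, A z) = evR ρ f y := by
    have e1 : (∑' z : ℕ × ℕ, A z) = ∑' z : ℕ × ℕ, A (z.2, z.1) :=
      ((Equiv.prodComm ℕ ℕ).tsum_eq A).symm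
    rw [e1, Summable.tsum_prod' hsw (fun k => hcol k)]
    refine tsum_congr fun k => ?_
    have : (∑' m : ℕ, A (m, k)) = ρ (PowerSeries.coeff k f) * y ^ k := by
      rw [show (fun m => A (m, k)) = fun m =>
        ρ (PowerSeries.coeff k f) * (ρ (PowerSeries.coeff m (g ^ k)) * x ^ m) from rfl,
        tsum_mul_left]
      rw [hy_def, ← evR_pow hρ g k hx, evR]
    simpa using this
  rw [h1, h2]

lemma evR_iter (hρ : ∀ a : ℤ_[p], ‖ρ a‖ ≤ 1) {u : PowerSeries ℤ_[p]} (hu0 : PowerSeries.coeff 0 u = 0)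
    {x : F} (hx : ‖x‖ < 1) (m : ℕ) :
    evR ρ (iterPS u m) x = (fun z => evR ρ u z)^[m] x := by
  induction m with
  | zero => simpa [iterPS] using evR_X (ρ := ρ) x
  | succ m ih =>
    rw [iterPS, evR_comp hρ u (coeff_zero_iterPS hu0 m) hx, ih,
      Function.iterate_succ_apply']

lemma norm_pow_sub_pow_le (x y : F) {t : ℝ} (hx : ‖x‖ ≤ t) (hy : ‖y‖ ≤ t) (n : ℕ) :
    ‖x ^ n - y ^ n‖ ≤ ‖x - y‖ * t ^ (n - 1) := by
  have ht0 : 0 ≤ t := le_trans (norm_nonneg x) hx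
  rw [← geom_sum₂_mul, norm_mul, mul_comm]
  gcongr
  refine IsUltrametricDist.norm_sum_le_of_forall_le_of_nonneg (by positivity) fun i hi => ?_
  rw [Finset.mem_range] at hi
  rw [norm_mul, norm_pow, norm_pow]
  calc ‖x‖ ^ i * ‖y‖ ^ (n - 1 - i) ≤ t ^ i * t ^ (n - 1 - i) := by gcongr
    _ = t ^ (n - 1) := by rw [← pow_add]; congr 1; omega

end General

section Main

variable {p : ℕ} [hp : Fact p.Prime] {F : Type*} [NormedField F] [CompleteSpace F]
  [IsUltrametricDist F]

lemma hmax3 {G : Type*} [SeminormedAddCommGroup G] [IsUltrametricDist G]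
    (a b c : G) {C : ℝ} (h1 : ‖a‖ ≤ C) (h2 : ‖b‖ ≤ C) (h3 : ‖c‖ ≤ C) : ‖a + b + c‖ ≤ C :=
  le_trans (IsUltrametricDist.norm_add_le_max _ _)
    (max_le (le_trans (IsUltrametricDist.norm_add_le_max _ _) (max_le h1 h2)) h3)

lemma padic_nonunit_norm_le {a : ℤ_[p]} (h : ¬ IsUnit a) : ‖a‖ ≤ (p : ℝ)⁻¹ := by
  obtain ⟨y, rfl⟩ := (PadicInt.norm_lt_one_iff_dvd _).mp (PadicInt.not_isUnit_iff.mp h)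
  rw [norm_mul, PadicInt.norm_p]
  exact mul_le_of_le_one_right (by positivity) (PadicInt.norm_le_one y)

lemma padic_nonunit_iff_toZMod {a : ℤ_[p]} : ¬ IsUnit a ↔ PadicInt.toZMod a = 0 := by
  rw [← RingHom.mem_ker, PadicInt.ker_toZMod, IsLocalRing.mem_maximalIdeal, mem_nonunits_iff]

set_option maxHeartbeats 1000000 in
lemma main_estimate (ρ : ℤ_[p] →+* F) (hρ : ∀ a : ℤ_[p], ‖ρ a‖ = ‖a‖)
    (g : PowerSeries ℤ_[p]) (hg0 : PowerSeries.coeff 0 g = 0)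
    (hg1 : IsUnit (PowerSeries.coeff 1 g))
    (u : PowerSeries ℤ_[p]) (hu0 : PowerSeries.coeff 0 u = 0)
    (δ n : ℕ) (hδ : δ = if p = 2 then 2 else 1) (hnδ : δ ≤ n)
    (w : PowerSeries ℤ_[p]) (hw : w = iterPS u (p ^ (n - δ)) - PowerSeries.X)
    (hwideg : IsUnit (PowerSeries.coeff (p ^ n) w))
    (hwlt : ∀ i < p ^ n, ¬ IsUnit (PowerSeries.coeff i w))
    (π : F) (hπ0 : π ≠ 0) (hπv : ‖π‖ ^ ((p - 1) * p ^ n) = (p : ℝ)⁻¹)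
    (c : ℤ_[p]) (hc : IsUnit c) :
    ∃! j : ℕ, (1 ≤ j ∧ j ≤ p - 1) ∧
      ‖evR ρ g ((fun x => evR ρ u x)^[j * p ^ (n - δ)] π) -
          (evR ρ g π + ρ c * π ^ (p ^ n))‖ ≤ ‖π‖ ^ (p ^ n + 1) := by
  have hp2 : 2 ≤ p := hp.out.two_le
  have hρ1 : ∀ a : ℤ_[p], ‖ρ a‖ ≤ 1 := fun a => by rw [hρ]; exact PadicInt.norm_le_one a
  set N := p ^ n with hN_def
  set q := p ^ (n - δ) with hq_def
  set t := ‖π‖ with ht_def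
  have ht0 : 0 < t := norm_pos_iff.mpr hπ0
  have hδ1 : 1 ≤ δ := by rw [hδ]; split <;> omega
  have hn1 : 1 ≤ n := le_trans hδ1 hnδ
  have hNpos : 0 < N := pow_pos (by omega) n
  have hN2 : 2 ≤ N := le_trans hp2 (by simpa using Nat.pow_le_pow_right (by omega) hn1)
  have hNle : N ≤ (p - 1) * N := by
    have h := Nat.mul_le_mul_right N (show 1 ≤ p - 1 by omega)
    simpa using h
  have h1N : 1 ≤ (p - 1) * N := by omega
  have hp1R : (1 : ℝ) < p := by exact_mod_cast hp.out.one_lt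
  have ht1 : t < 1 := by
    by_contra h
    push_neg at h
    have h2 : (1 : ℝ) ≤ t ^ ((p - 1) * N) := one_le_pow₀ h
    rw [hπv] at h2
    have h3 : (p : ℝ)⁻¹ < 1 := by
      rw [inv_lt_one₀ (by linarith)]
      exact hp1R
    linarith
  have hpt : (p : ℝ)⁻¹ ≤ t := by
    calc (p : ℝ)⁻¹ = t ^ ((p - 1) * N) := hπv.symm
      _ ≤ t ^ 1 := pow_le_pow_of_le_one ht0.le ht1.le h1N
      _ = t := pow_one t
  have htN : t ^ N ≤ t := by
    calc t ^ N ≤ t ^ 1 := pow_le_pow_of_le_one ht0.le ht1.le (by omega)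
      _ = t := pow_one t
  have hb0 : PowerSeries.coeff 0 w = 0 := by
    rw [hw, map_sub, coeff_zero_iterPS hu0]
    simp
  have hblt : ∀ i, i < N → ‖PowerSeries.coeff i w‖ ≤ (p : ℝ)⁻¹ := fun i hi =>
    padic_nonunit_norm_le (hwlt i hi)
  set b := PowerSeries.coeff N w with hb_def
  set g1 := PowerSeries.coeff 1 g with hg1_def
  -- H1 : uniform bound for evR w
  have H1 : ∀ z : F, ‖z‖ ≤ t → ‖evR ρ w z‖ ≤ t ^ N := by
    intro z hz
    refine norm_evR_le _ _ (pow_nonneg ht0.le N) fun i => ?_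
    rcases Nat.lt_or_ge i N with hi | hi
    · rcases Nat.eq_zero_or_pos i with rfl | hipos
      · simp only [hb0, map_zero, zero_mul, norm_zero]
        exact pow_nonneg ht0.le N
      · calc ‖ρ (PowerSeries.coeff i w) * z ^ i‖
            = ‖ρ (PowerSeries.coeff i w)‖ * ‖z‖ ^ i := by rw [norm_mul, norm_pow]
          _ ≤ (p : ℝ)⁻¹ * t ^ i := by
              gcongr
              · rw [hρ]; exact hblt i hi
          _ = t ^ ((p - 1) * N) * t ^ i := by rw [← hπv]
          _ = t ^ ((p - 1) * N + i) := (pow_add t _ _).symm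
          _ ≤ t ^ N := pow_le_pow_of_le_one ht0.le ht1.le (by omega)
    · calc ‖ρ (PowerSeries.coeff i w) * z ^ i‖ ≤ ‖z‖ ^ i := norm_term_le hρ1 w z i
        _ ≤ t ^ i := by gcongr
        _ ≤ t ^ N := pow_le_pow_of_le_one ht0.le ht1.le hi
  -- H2 : leading-term approximation at π
  have H2 : ‖evR ρ w π - ρ b * π ^ N‖ ≤ t ^ (N + 1) := by
    have he : evR ρ (w - PowerSeries.monomial N b) π = evR ρ w π - ρ b * π ^ N := by
      rw [evR_sub hρ1 _ _ ht1, evR_monomial]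
    rw [← he]
    refine norm_evR_le _ _ (pow_nonneg ht0.le (N + 1)) fun i => ?_
    have hcoeff : PowerSeries.coeff i (w - PowerSeries.monomial N b)
        = if i = N then 0 else PowerSeries.coeff i w := by
      rw [map_sub, PowerSeries.coeff_monomial]
      split_ifs with h
      · subst h; ring
      · ring
    rcases eq_or_ne i N with rfl | hiN
    · have hzero : PowerSeries.coeff N (w - PowerSeries.monomial N b) = 0 := by
        rw [map_sub, PowerSeries.coeff_monomial, if_pos rfl]
        ring
      rw [hzero]
      simp only [map_zero, zero_mul, norm_zero]
      exact pow_nonneg ht0.le (N + 1)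
    rw [hcoeff, if_neg hiN]
    rcases Nat.lt_or_ge i N with hi | hi
    · rcases Nat.eq_zero_or_pos i with rfl | hipos
      · simp only [hb0, map_zero, zero_mul, norm_zero]
        exact pow_nonneg ht0.le (N + 1)
      · calc ‖ρ (PowerSeries.coeff i w) * π ^ i‖
            = ‖ρ (PowerSeries.coeff i w)‖ * ‖π‖ ^ i := by rw [norm_mul, norm_pow]
          _ ≤ (p : ℝ)⁻¹ * t ^ i := by
              gcongr
              · rw [hρ]; exact hblt i hi
          _ = t ^ ((p - 1) * N + i) := by rw [← hπv, ← pow_add]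
          _ ≤ t ^ (N + 1) := pow_le_pow_of_le_one ht0.le ht1.le (by omega)
    · have hi1 : N + 1 ≤ i := by omega
      calc ‖ρ (PowerSeries.coeff i w) * π ^ i‖ ≤ ‖π‖ ^ i := norm_term_le hρ1 w π i
        _ ≤ t ^ (N + 1) := pow_le_pow_of_le_one ht0.le ht1.le hi1
  -- Hgen : Lipschitz bound
  have Hgen : ∀ f : PowerSeries ℤ_[p], PowerSeries.coeff 0 f = 0 →
      ‖PowerSeries.coeff 1 f‖ ≤ t → ∀ z y : F, ‖z‖ ≤ t → ‖y‖ ≤ t →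
      ‖evR ρ f z - evR ρ f y‖ ≤ t * ‖z - y‖ := by
    intro f hf0 hf1 z y hz hy
    have hz1 : ‖z‖ < 1 := lt_of_le_of_lt hz ht1
    have hy1 : ‖y‖ < 1 := lt_of_le_of_lt hy ht1
    have hsum : HasSum (fun i : ℕ => ρ (PowerSeries.coeff i f) * (z ^ i - y ^ i))
        (evR ρ f z - evR ρ f y) := by
      have h := (hasSum_evR hρ1 f hz1).sub (hasSum_evR hρ1 f hy1)
      convert h using 2 with i
      · rfl
      ring
    rw [← hsum.tsum_eq]
    refine IsUltrametricDist.norm_tsum_le_of_forall_le_of_nonneg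
      (mul_nonneg ht0.le (norm_nonneg _)) fun i => ?_
    rcases Nat.eq_zero_or_pos i with rfl | hipos
    · simp only [pow_zero, sub_self, mul_zero, norm_zero]
      exact mul_nonneg ht0.le (norm_nonneg _)
    have hfac : ‖ρ (PowerSeries.coeff i f)‖ * t ^ (i - 1) ≤ t := by
      rcases eq_or_ne i 1 with rfl | hi1
      · have h1 : ‖ρ (PowerSeries.coeff 1 f)‖ ≤ t := by rw [hρ]; exact hf1
        simpa using h1
      · calc ‖ρ (PowerSeries.coeff i f)‖ * t ^ (i - 1) ≤ 1 * t ^ (i - 1) := by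
              gcongr
              exact hρ1 _
          _ = t ^ (i - 1) := one_mul _
          _ ≤ t ^ 1 := pow_le_pow_of_le_one ht0.le ht1.le (by omega)
          _ = t := pow_one t
    calc ‖ρ (PowerSeries.coeff i f) * (z ^ i - y ^ i)‖
        = ‖ρ (PowerSeries.coeff i f)‖ * ‖z ^ i - y ^ i‖ := norm_mul _ _
      _ ≤ ‖ρ (PowerSeries.coeff i f)‖ * (‖z - y‖ * t ^ (i - 1)) := by
          gcongr
          exact norm_pow_sub_pow_le z y hz hy i
      _ = (‖ρ (PowerSeries.coeff i f)‖ * t ^ (i - 1)) * ‖z - y‖ := by ring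
      _ ≤ t * ‖z - y‖ := by gcongr
  have hw1t : ‖PowerSeries.coeff 1 w‖ ≤ t := le_trans (hblt 1 (by omega)) hpt
  -- H6 : linearization of g
  have H6 : ∀ z : F, ‖z‖ ≤ t →
      ‖(evR ρ g z - evR ρ g π) - ρ g1 * (z - π)‖ ≤ t * ‖z - π‖ := by
    intro z hz
    set g' := g - PowerSeries.monomial 1 g1 with hg'_def
    have hg'0 : PowerSeries.coeff 0 g' = 0 := by
      rw [hg'_def, map_sub, hg0, PowerSeries.coeff_monomial]
      simp
    have hg'1 : PowerSeries.coeff 1 g' = 0 := by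
      rw [hg'_def, map_sub, PowerSeries.coeff_monomial]
      simp [hg1_def]
    have e1 : ∀ y : F, ‖y‖ < 1 → evR ρ g' y = evR ρ g y - ρ g1 * y := fun y hy => by
      rw [hg'_def, evR_sub hρ1 _ _ hy, evR_monomial, pow_one]
    have h := Hgen g' hg'0 (by rw [hg'1]; simpa using ht0.le) z π hz le_rfl
    rw [e1 z (lt_of_le_of_lt hz ht1), e1 π ht1] at h
    calc ‖(evR ρ g z - evR ρ g π) - ρ g1 * (z - π)‖
        = ‖(evR ρ g z - ρ g1 * z) - (evR ρ g π - ρ g1 * π)‖ := by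
          rw [show (evR ρ g z - evR ρ g π) - ρ g1 * (z - π)
            = (evR ρ g z - ρ g1 * z) - (evR ρ g π - ρ g1 * π) by ring]
      _ ≤ t * ‖z - π‖ := h
  -- the orbit
  set ζ : ℕ → F := fun j => (fun x => evR ρ u x)^[j * q] π with hζ_def
  have hζzero : ζ 0 = π := by simp [hζ_def]
  have hwW : ∀ z : F, ‖z‖ < 1 → evR ρ (iterPS u q) z = z + evR ρ w z := by
    intro z hz
    have h := evR_sub hρ1 (iterPS u q) PowerSeries.X (x := z) hz
    rw [← hw, evR_X] at h
    rw [h]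
    ring
  have horb : ∀ j : ℕ, ‖ζ j - π‖ ≤ t ^ N ∧
      ‖ζ j - (π + (j : F) * (ρ b * π ^ N))‖ ≤ t ^ (N + 1) := by
    intro j
    induction j with
    | zero =>
      refine ⟨?_, ?_⟩
      · rw [hζzero]
        simp only [sub_self, norm_zero]
        exact pow_nonneg ht0.le N
      · rw [hζzero]
        simp only [Nat.cast_zero, zero_mul, add_zero, sub_self, norm_zero]
        exact pow_nonneg ht0.le (N + 1)
    | succ j ih =>
      obtain ⟨ih1, ih2⟩ := ih
      have hζt : ‖ζ j‖ ≤ t := by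
        rw [show ζ j = (ζ j - π) + π by ring]
        exact le_trans (IsUltrametricDist.norm_add_le_max _ _)
          (max_le (le_trans ih1 htN) le_rfl)
      have hζ1 : ‖ζ j‖ < 1 := lt_of_le_of_lt hζt ht1
      have hstep : ζ (j + 1) = ζ j + evR ρ w (ζ j) := by
        have h1 : ζ (j + 1) = (fun x => evR ρ u x)^[q] (ζ j) := by
          show (fun x => evR ρ u x)^[(j + 1) * q] π = _
          rw [show (j + 1) * q = q + j * q by ring, Function.iterate_add_apply]
        rw [h1, ← evR_iter hρ1 hu0 hζ1 q, hwW (ζ j) hζ1]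
      refine ⟨?_, ?_⟩
      · rw [hstep, show ζ j + evR ρ w (ζ j) - π = (ζ j - π) + evR ρ w (ζ j) by ring]
        exact le_trans (IsUltrametricDist.norm_add_le_max _ _)
          (max_le ih1 (H1 _ hζt))
      · rw [hstep, show ζ j + evR ρ w (ζ j) - (π + ((j + 1 : ℕ) : F) * (ρ b * π ^ N)) =
          (ζ j - (π + (j : F) * (ρ b * π ^ N))) + (evR ρ w (ζ j) - evR ρ w π)
            + (evR ρ w π - ρ b * π ^ N) by push_cast; ring]
        refine hmax3 _ _ _ ih2 ?_ H2
        calc ‖evR ρ w (ζ j) - evR ρ w π‖ ≤ t * ‖ζ j - π‖ :=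
            Hgen w hb0 hw1t (ζ j) π hζt le_rfl
          _ ≤ t * t ^ N := by gcongr
          _ = t ^ (N + 1) := by rw [pow_succ]; ring
  -- the key equivalence
  have key : ∀ j : ℕ,
      (‖evR ρ g (ζ j) - (evR ρ g π + ρ c * π ^ N)‖ ≤ t ^ (N + 1)) ↔
        ¬ IsUnit ((j : ℤ_[p]) * g1 * b - c) := by
    intro j
    set e := (j : ℤ_[p]) * g1 * b - c with he_def
    obtain ⟨horb1, horb2⟩ := horb j
    have hζt : ‖ζ j‖ ≤ t := by
      rw [show ζ j = (ζ j - π) + π by ring]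
      exact le_trans (IsUltrametricDist.norm_add_le_max _ _)
        (max_le (le_trans horb1 htN) le_rfl)
    have hD : evR ρ g (ζ j) - (evR ρ g π + ρ c * π ^ N) =
        ((evR ρ g (ζ j) - evR ρ g π) - ρ g1 * (ζ j - π))
        + ρ g1 * (ζ j - (π + (j : F) * (ρ b * π ^ N)))
        + ρ e * π ^ N := by
      rw [he_def, map_sub, map_mul, map_mul, map_natCast]
      ring
    have hA : ‖(evR ρ g (ζ j) - evR ρ g π) - ρ g1 * (ζ j - π)‖ ≤ t ^ (N + 1) := by
      calc ‖(evR ρ g (ζ j) - evR ρ g π) - ρ g1 * (ζ j - π)‖ ≤ t * ‖ζ j - π‖ := H6 _ hζt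
        _ ≤ t * t ^ N := by gcongr
        _ = t ^ (N + 1) := by rw [pow_succ]; ring
    have hB : ‖ρ g1 * (ζ j - (π + (j : F) * (ρ b * π ^ N)))‖ ≤ t ^ (N + 1) := by
      calc ‖ρ g1 * (ζ j - (π + (j : F) * (ρ b * π ^ N)))‖
          = ‖ρ g1‖ * ‖ζ j - (π + (j : F) * (ρ b * π ^ N))‖ := norm_mul _ _
        _ ≤ 1 * t ^ (N + 1) := by
            gcongr
            exact hρ1 _
        _ = t ^ (N + 1) := one_mul _
    have hE : ‖ρ e * π ^ N‖ = ‖e‖ * t ^ N := by rw [norm_mul, hρ, norm_pow]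
    constructor
    · intro h
      have hEle : ‖ρ e * π ^ N‖ ≤ t ^ (N + 1) := by
        rw [show ρ e * π ^ N =
          (evR ρ g (ζ j) - (evR ρ g π + ρ c * π ^ N))
          + (-((evR ρ g (ζ j) - evR ρ g π) - ρ g1 * (ζ j - π)))
          + (-(ρ g1 * (ζ j - (π + (j : F) * (ρ b * π ^ N))))) by rw [hD]; ring]
        exact hmax3 _ _ _ h (by rwa [norm_neg]) (by rwa [norm_neg])
      rw [hE, pow_succ] at hEle
      have hpow : (0 : ℝ) < t ^ N := pow_pos ht0 N
      have he_t : ‖e‖ ≤ t := by nlinarith [hEle]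
      intro hu
      rw [PadicInt.isUnit_iff.mp hu] at he_t
      linarith
    · intro h
      have he_small : ‖e‖ ≤ (p : ℝ)⁻¹ := padic_nonunit_norm_le h
      rw [hD]
      refine hmax3 _ _ _ hA hB ?_
      calc ‖ρ e * π ^ N‖ = ‖e‖ * t ^ N := hE
        _ ≤ t * t ^ N := by
            gcongr
            exact le_trans he_small hpt
        _ = t ^ (N + 1) := by rw [pow_succ]; ring
  -- arithmetic in ZMod p
  haveI : NeZero p := ⟨hp.out.ne_zero⟩
  set v : ZMod p := PadicInt.toZMod (g1 * b) with hv_def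
  have hvu : IsUnit v := (hg1.mul hwideg).map PadicInt.toZMod
  have hv0 : v ≠ 0 := hvu.ne_zero
  set r : ZMod p := PadicInt.toZMod c * v⁻¹ with hr_def
  have hr0 : r ≠ 0 := mul_ne_zero (hc.map PadicInt.toZMod).ne_zero (inv_ne_zero hv0)
  have hmap : ∀ j : ℕ, PadicInt.toZMod ((j : ℤ_[p]) * g1 * b - c)
      = (j : ZMod p) * v - PadicInt.toZMod c := by
    intro j
    rw [mul_assoc, map_sub, map_mul, map_natCast, hv_def]
  have keyZ : ∀ j : ℕ, (¬ IsUnit ((j : ℤ_[p]) * g1 * b - c)) ↔ (j : ZMod p) = r := by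
    intro j
    rw [padic_nonunit_iff_toZMod, hmap j, sub_eq_zero, hr_def,
      eq_mul_inv_iff_mul_eq₀ hv0]
  have hvallt : r.val < p := ZMod.val_lt r
  have hval0 : r.val ≠ 0 := fun h0 => hr0 ((ZMod.val_eq_zero r).mp h0)
  have hvalcast : ((r.val : ℕ) : ZMod p) = r := ZMod.natCast_rightInverse r
  refine ⟨r.val, ⟨⟨by omega, by omega⟩, ?_⟩, ?_⟩
  · exact (key r.val).mpr ((keyZ r.val).mpr hvalcast)
  · rintro j' ⟨⟨hj1, hj2⟩, hj⟩
    have hcond : (j' : ZMod p) = r := (keyZ j').mp ((key j').mp hj)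
    have hcast2 : ((j' : ℕ) : ZMod p) = ((r.val : ℕ) : ZMod p) := by rw [hcond, hvalcast]
    have hmod : j' % p = r.val := by
      have h := congrArg ZMod.val hcast2
      simpa [ZMod.val_natCast, Nat.mod_eq_of_lt hvallt] using h
    have h1 : j' % p = j' := Nat.mod_eq_of_lt (by omega)
    omega

end Main

theorem stmt_14 (p : ℕ) [Fact p.Prime]
    {K : Type*} [NormedField K] [IsUltrametricDist K]
    [Algebra ℚ_[p] K] [Algebra ℤ_[p] K] [IsScalarTower ℤ_[p] ℚ_[p] K]
    [IsAlgClosure ℚ_[p] K]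
    (hK : ∀ x : ℚ_[p], ‖algebraMap ℚ_[p] K x‖ = ‖x‖)
    -- `g` is invertible under composition
    (g : PowerSeries ℤ_[p])
    (hg0 : PowerSeries.coeff 0 g = 0)
    (hg1 : IsUnit (PowerSeries.coeff 1 g))
    (u : PowerSeries ℤ_[p])
    (hu0 : PowerSeries.coeff 0 u = 0)
    (huinv : IsUnit (PowerSeries.coeff 1 u))
    (δ n : ℕ) (hδ : δ = if p = 2 then 2 else 1) (hnδ : δ ≤ n)
    (w : PowerSeries ℤ_[p]) (hw : w = iterPS u (p ^ (n - δ)) - PowerSeries.X)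
    (hwideg : IsUnit (PowerSeries.coeff (p ^ n) w))
    (hwlt : ∀ i < p ^ n, ¬ IsUnit (PowerSeries.coeff i w))
    (π : K) (hπ0 : π ≠ 0) (hπv : ‖π‖ ^ ((p - 1) * p ^ n) = (p : ℝ)⁻¹)
    (c : ℤ_[p]) (hc : IsUnit c) :
    -- there is a unique `1 ≤ j ≤ p-1` with
    -- `g(u^{∘jp^{n-δ}}(π)) - g(π) ≡ c π^{p^n} mod π^{p^n + 1}`
    ∃! j : ℕ, (1 ≤ j ∧ j ≤ p - 1) ∧
      ‖evalT g ((fun x => evalT u x)^[j * p ^ (n - δ)] π) -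
          (evalT g π + algebraMap ℤ_[p] K c * π ^ (p ^ n))‖ ≤ ‖π‖ ^ (p ^ n + 1) := by
  have hprime : p.Prime := Fact.out
  have hp2 : 2 ≤ p := hprime.two_le
  letI : NormedSpace ℚ_[p] K :=
    { norm_smul_le := fun a x => le_of_eq (by rw [Algebra.smul_def, norm_mul, hK]) }
  have hint : IsIntegral ℚ_[p] π := (Algebra.IsAlgebraic.isAlgebraic (R := ℚ_[p]) π).isIntegral
  set L : IntermediateField ℚ_[p] K := IntermediateField.adjoin ℚ_[p] {π} with hL_def
  haveI : FiniteDimensional ℚ_[p] ↥L := IntermediateField.adjoin.finiteDimensional hint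
  have hcoe_norm : ∀ y : ↥L, ‖y‖ = ‖(y : K)‖ := fun y => rfl
  letI : NormedSpace ℚ_[p] ↥L :=
    { norm_smul_le := fun a x => by
        have h1 : ((a • x : ↥L) : K) = a • (x : K) := rfl
        rw [hcoe_norm, h1, norm_smul, ← hcoe_norm] }
  haveI : CompleteSpace ↥L := FiniteDimensional.complete ℚ_[p] ↥L
  haveI : IsUltrametricDist ↥L := by
    refine IsUltrametricDist.isUltrametricDist_of_forall_norm_add_le_max_norm ?_
    intro x y
    have h1 : ((x + y : ↥L) : K) = (x : K) + (y : K) := rfl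
    rw [hcoe_norm, h1, hcoe_norm x, hcoe_norm y]
    exact IsUltrametricDist.norm_add_le_max _ _
  set ρ : ℤ_[p] →+* ↥L := (algebraMap ℚ_[p] ↥L).comp (@PadicInt.Coe.ringHom p _) with hρ_def
  have hcastK : ∀ a : ℤ_[p], ((ρ a : ↥L) : K) = algebraMap ℤ_[p] K a := by
    intro a
    rw [IsScalarTower.algebraMap_apply ℤ_[p] ℚ_[p] K]
    rfl
  have hρiso : ∀ a : ℤ_[p], ‖ρ a‖ = ‖a‖ := by
    intro a
    rw [hcoe_norm, hcastK, IsScalarTower.algebraMap_apply ℤ_[p] ℚ_[p] K, hK]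
    rfl
  have hρ1 : ∀ a : ℤ_[p], ‖ρ a‖ ≤ 1 := fun a => by
    rw [hρiso]; exact PadicInt.norm_le_one a
  set π' : ↥L := ⟨π, IntermediateField.mem_adjoin_simple_self ℚ_[p] π⟩ with hπ'_def
  have hπ'K : ((π' : ↥L) : K) = π := rfl
  have hnπ : ‖π'‖ = ‖π‖ := rfl
  have hπ'0 : π' ≠ 0 := by
    intro h
    apply hπ0
    rw [← hπ'K, h, ZeroMemClass.coe_zero]
  have hπ'v : ‖π'‖ ^ ((p - 1) * p ^ n) = (p : ℝ)⁻¹ := by rw [hnπ]; exact hπv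
  have hπpos : 0 < ‖π'‖ := by rw [hnπ]; exact norm_pos_iff.mpr hπ0
  have hπ'1 : ‖π'‖ < 1 := by
    by_contra h
    push_neg at h
    have h2 : (1 : ℝ) ≤ ‖π'‖ ^ ((p - 1) * p ^ n) := one_le_pow₀ h
    rw [hπ'v] at h2
    have hp1R : (1 : ℝ) < p := by exact_mod_cast hprime.one_lt
    have h3 : (p : ℝ)⁻¹ < 1 := by
      rw [inv_lt_one₀ (by linarith)]
      exact hp1R
    linarith
  -- transport of evaluation
  have hev : ∀ (f : PowerSeries ℤ_[p]) (y : ↥L), ‖y‖ < 1 →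
      evalT f ((y : ↥L) : K) = ((evR ρ f y : ↥L) : K) := by
    intro f y hy
    have h1 := hasSum_evR hρ1 f hy
    have hisom : Isometry (fun z : ↥L => (z : K)) :=
      Isometry.of_dist_eq (fun x y => rfl)
    have h2 := h1.map (SubringClass.subtype L) hisom.continuous
    have h3 : HasSum (fun m : ℕ => algebraMap ℤ_[p] K (PowerSeries.coeff m f) * (y : K) ^ m)
        ((evR ρ f y : ↥L) : K) := by
      convert h2 using 2 with m
      show algebraMap ℤ_[p] K (PowerSeries.coeff m f) * (y : K) ^ m
        = ((ρ (PowerSeries.coeff m f) * y ^ m : ↥L) : K)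
      push_cast
      rw [hcastK]
      rfl
    exact h3.tsum_eq
  -- transport of iterates
  have hiter : ∀ m : ℕ, (fun x => evalT u x)^[m] π = (((fun z => evR ρ u z)^[m] π' : ↥L) : K)
      ∧ ‖(fun z => evR ρ u z)^[m] π'‖ ≤ ‖π'‖ := by
    intro m
    induction m with
    | zero => exact ⟨hπ'K.symm, le_rfl⟩
    | succ m ih =>
      obtain ⟨ih1, ih2⟩ := ih
      have hlt : ‖(fun z => evR ρ u z)^[m] π'‖ < 1 := lt_of_le_of_lt ih2 hπ'1
      refine ⟨?_, ?_⟩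
      · rw [Function.iterate_succ_apply', Function.iterate_succ_apply', ih1]
        exact hev u _ hlt
      · rw [Function.iterate_succ_apply']
        exact le_trans (norm_evR_le_norm hρ1 hu0 hlt.le) ih2
  have hmain := main_estimate ρ hρiso g hg0 hg1 u hu0 δ n hδ hnδ w hw hwideg hwlt π' hπ'0 hπ'v c hc
  have hiff : ∀ j : ℕ,
      (‖evalT g ((fun x => evalT u x)^[j * p ^ (n - δ)] π) -
          (evalT g π + algebraMap ℤ_[p] K c * π ^ (p ^ n))‖ ≤ ‖π‖ ^ (p ^ n + 1)) ↔
      (‖evR ρ g ((fun x => evR ρ u x)^[j * p ^ (n - δ)] π') -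
          (evR ρ g π' + ρ c * π' ^ (p ^ n))‖ ≤ ‖π'‖ ^ (p ^ n + 1)) := by
    intro j
    obtain ⟨h1, h2⟩ := hiter (j * p ^ (n - δ))
    have hZlt : ‖(fun z => evR ρ u z)^[j * p ^ (n - δ)] π'‖ < 1 := lt_of_le_of_lt h2 hπ'1
    have e1 : evalT g ((fun x => evalT u x)^[j * p ^ (n - δ)] π)
        = ((evR ρ g ((fun z => evR ρ u z)^[j * p ^ (n - δ)] π') : ↥L) : K) := by
      rw [h1]
      exact hev g _ hZlt
    have e2 : evalT g π = ((evR ρ g π' : ↥L) : K) := by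
      rw [← hπ'K]
      exact hev g π' hπ'1
    have e3 : evalT g ((fun x => evalT u x)^[j * p ^ (n - δ)] π) -
        (evalT g π + algebraMap ℤ_[p] K c * π ^ (p ^ n))
        = (((evR ρ g ((fun z => evR ρ u z)^[j * p ^ (n - δ)] π') -
            (evR ρ g π' + ρ c * π' ^ (p ^ n))) : ↥L) : K) := by
      rw [e1, e2, ← hπ'K, ← hcastK]
      push_cast
      ring
    rw [e3, ← hcoe_norm, hnπ]
  obtain ⟨j₀, hj₀, huniq⟩ := hmain
  exact ⟨j₀, ⟨hj₀.1, (hiff j₀).mpr hj₀.2⟩, fun j' hj' => huniq j' ⟨hj'.1, (hiff j').mp hj'.2⟩⟩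


end
end
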